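/- arXiv:0811.2572 — 6 statements merged into one kernel-verified Lean document; each statement's English description precedes it below -/
import Mathlib

section
/- Let G be a perfect graph on n ≥ 1 vertices, let S_1, …, S_k be a greedy stable-set sequence of G, and let g̃ be the entropy of the associated greedy point. Then for every real δ with 0 < δ < 1, g̃ ≤ (1/(1−δ))·(H(G) + log₂(1/δ)). -/
/-- A stable (independent) set of a simple graph, as a `Finset` of vertices. -/
def IsStableSet {V : Type*} (G : SimpleGraph V) (S : Finset V) : Prop :=
  ∀ v ∈ S, ∀ w ∈ S, ¬ G.Adj v w

/-- The stable set polytope `STAB(G)`: the convex hull of characteristic vectors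
of stable sets of `G`. -/
noncomputable def STAB {V : Type*} [Fintype V] [DecidableEq V] (G : SimpleGraph V) :
    Set (V → ℝ) :=
  convexHull ℝ {x | ∃ S : Finset V, IsStableSet G S ∧
    x = fun v => if v ∈ S then (1 : ℝ) else 0}

/-- The (Körner) entropy of a graph `G` on `n` vertices:
`H(G) = min_{x ∈ STAB(G), x > 0} -(1/n) ∑_v log₂ x_v`. -/
noncomputable def graphEntropy {V : Type*} [Fintype V] [DecidableEq V]
    (G : SimpleGraph V) : ℝ :=
  sInf {h : ℝ | ∃ x ∈ STAB G, (∀ v, 0 < x v) ∧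
    h = -(1 / (Fintype.card V : ℝ)) * ∑ v, Real.logb 2 (x v)}

/-- A graph is perfect if every induced subgraph has clique number equal to
chromatic number. -/
def IsPerfect {V : Type*} (G : SimpleGraph V) : Prop :=
  ∀ U : Set V, ((G.induce U).cliqueNum : ℕ∞) = (G.induce U).chromaticNumber

/-- `S 0, S 1, …, S (k-1)` is a greedy stable-set sequence of `G`: the `S i` are
pairwise disjoint stable sets partitioning the vertex set, and each `S i` is a
maximum-cardinality stable set among those avoiding `S 0 ∪ ⋯ ∪ S (i-1)`. -/
def IsGreedySeq {V : Type*} [Fintype V] (G : SimpleGraph V) {k : ℕ}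
    (S : Fin k → Finset V) : Prop :=
  (∀ i, IsStableSet G (S i)) ∧
  (∀ i j, i ≠ j → Disjoint (S i) (S j)) ∧
  (∀ v : V, ∃ i, v ∈ S i) ∧
  (∀ i : Fin k, ∀ T : Finset V, IsStableSet G T →
    (∀ v ∈ T, ∀ j, j < i → v ∉ S j) → T.card ≤ (S i).card)

/-- The entropy `g̃ = ∑_i (|S i|/n) log₂ (n/|S i|)` of the greedy point
`x̃ = ∑_i (|S i|/n) χ^{S i}` associated to a greedy stable-set sequence. -/
noncomputable def greedyEntropy {V : Type*} [Fintype V] {k : ℕ}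
    (S : Fin k → Finset V) : ℝ :=
  ∑ i, ((S i).card / (Fintype.card V : ℝ)) *
    Real.logb 2 ((Fintype.card V : ℝ) / (S i).card)

open Finset

private lemma bern_rpow {x δ : ℝ} (hx : 0 ≤ x) (hδ0 : 0 ≤ δ) (hδ1 : δ ≤ 1) :
    x ^ δ ≤ 1 - δ + δ * x := by
  have h := Real.geom_mean_le_arith_mean2_weighted hδ0 (by linarith : (0:ℝ) ≤ 1 - δ)
    hx zero_le_one (by ring)
  rw [Real.one_rpow, mul_one] at h
  linarith

private lemma mono_phi {δ : ℝ} (hδ0 : 0 < δ) (hδ1 : δ ≤ 1) {r r' Q : ℝ}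
    (hr : 0 < r) (hrr : r ≤ r') (hQ0 : 0 ≤ Q) (hQr : Q ≤ r) :
    r ^ δ / δ - (r - Q) * r ^ (δ - 1) ≤ r' ^ δ / δ - (r' - Q) * r' ^ (δ - 1) := by
  have hr' : 0 < r' := lt_of_lt_of_le hr hrr
  set A := r ^ δ with hA
  set B := r' ^ δ with hB
  have hApos : 0 < A := Real.rpow_pos_of_pos hr δ
  have hBpos : 0 < B := Real.rpow_pos_of_pos hr' δ
  have hxδ : (r / r') ^ δ = A / B := Real.div_rpow hr.le hr'.le δ
  have hbern : A / B ≤ 1 - δ + δ * (r / r') := by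
    rw [← hxδ]
    exact bern_rpow (by positivity) hδ0.le hδ1
  have hAr' : A * r' ≤ B * ((1 - δ) * r' + δ * r) := by
    have h1 : A / B * (B * r') ≤ (1 - δ + δ * (r / r')) * (B * r') :=
      mul_le_mul_of_nonneg_right hbern (by positivity)
    have e1 : A / B * (B * r') = A * r' := by field_simp
    have e2 : (1 - δ + δ * (r / r')) * (B * r') = B * ((1 - δ) * r' + δ * r) := by
      field_simp
    rw [e1, e2] at h1; exact h1
  have hrw : r ^ (δ - 1) = A / r := by
    rw [hA, Real.rpow_sub hr, Real.rpow_one]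
  have hrw' : r' ^ (δ - 1) = B / r' := by
    rw [hB, Real.rpow_sub hr', Real.rpow_one]
  rw [hrw, hrw']
  have hpos : (0:ℝ) < δ * r * r' := by positivity
  rw [← mul_le_mul_iff_of_pos_right hpos]
  have e3 : (A / δ - (r - Q) * (A / r)) * (δ * r * r') = A * r' * ((1 - δ) * r + δ * Q) := by
    field_simp; ring
  have e4 : (B / δ - (r' - Q) * (B / r')) * (δ * r * r') = B * r * ((1 - δ) * r' + δ * Q) := by
    field_simp; ring
  rw [e3, e4]
  calc A * r' * ((1 - δ) * r + δ * Q)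
      ≤ B * ((1 - δ) * r' + δ * r) * ((1 - δ) * r + δ * Q) := by
        apply mul_le_mul_of_nonneg_right hAr'
        nlinarith [mul_nonneg (by linarith : (0:ℝ) ≤ 1 - δ) hr.le, mul_nonneg hδ0.le hQ0]
    _ ≤ B * r * ((1 - δ) * r' + δ * Q) := by
        have hdiff : B * r * ((1 - δ) * r' + δ * Q)
            - B * ((1 - δ) * r' + δ * r) * ((1 - δ) * r + δ * Q)
            = B * (δ * ((1 - δ) * ((r' - r) * (r - Q)))) := by ring
        have hnn : 0 ≤ B * (δ * ((1 - δ) * ((r' - r) * (r - Q)))) := by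
          apply mul_nonneg hBpos.le
          apply mul_nonneg hδ0.le
          apply mul_nonneg (by linarith)
          exact mul_nonneg (by linarith) (by linarith)
        linarith

private lemma key_inv {δ : ℝ} (hδ0 : 0 < δ) (hδ1 : δ ≤ 1) :
    ∀ (K : ℕ) (a d : ℕ → ℝ), (∀ i < K + 1, 0 < a i) →
      (∀ i, i + 1 < K + 1 → a (i + 1) ≤ a i) →
      (∀ i < K + 1, 0 ≤ d i) →
      (∀ i < K + 1, ∑ j ∈ Finset.Ico i (K + 1), d j ≤ a i) →
      ∑ i ∈ Finset.range (K + 1), d i * a i ^ (δ - 1)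
        + (a 0 - ∑ i ∈ Finset.range (K + 1), d i) * a 0 ^ (δ - 1) ≤ a 0 ^ δ / δ := by
  intro K
  induction K with
  | zero =>
    intro a d ha _ _ _
    have h0 : 0 < a 0 := ha 0 (by norm_num)
    have e : ∑ i ∈ Finset.range 1, d i * a i ^ (δ - 1)
        + (a 0 - ∑ i ∈ Finset.range 1, d i) * a 0 ^ (δ - 1) = a 0 * a 0 ^ (δ - 1) := by
      simp; ring
    rw [e]
    have e2 : a 0 * a 0 ^ (δ - 1) = a 0 ^ δ := by
      rw [Real.rpow_sub h0, Real.rpow_one]; field_simp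
    rw [e2, le_div_iff₀ hδ0]
    nlinarith [Real.rpow_pos_of_pos h0 δ]
  | succ K ih =>
    intro a d ha hmono hd hsuf
    have ha1 : 0 < a 1 := ha 1 (by omega)
    have ha0 : 0 < a 0 := ha 0 (by omega)
    have hshift : ∀ i, ∑ j ∈ Finset.Ico i (K + 1), d (j + 1)
        = ∑ j ∈ Finset.Ico (i+1) (K + 2), d j := by
      intro i
      rw [← Finset.map_add_right_Ico _ _ 1, Finset.sum_map]
      simp
    have ihc := ih (fun i => a (i + 1)) (fun i => d (i + 1))
      (fun i hi => ha (i + 1) (by omega))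
      (fun i hi => hmono (i + 1) (by omega))
      (fun i hi => hd (i + 1) (by omega))
      (fun i hi => by rw [hshift i]; exact hsuf (i + 1) (by omega))
    set D' : ℝ := ∑ i ∈ Finset.range (K + 1), d (i + 1) with hD'
    have hD'eq : D' = ∑ j ∈ Finset.Ico 1 (K + 2), d j := by
      rw [hD', Finset.range_eq_Ico, hshift 0]
    have hD'nonneg : 0 ≤ D' := by
      rw [hD']; exact Finset.sum_nonneg fun i hi => hd (i+1) (by simp at hi; omega)
    have hD'le : D' ≤ a 1 := by
      rw [hD'eq]; exact hsuf 1 (by omega)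
    have peel1 : ∑ i ∈ Finset.range (K + 2), d i * a i ^ (δ - 1)
        = ∑ i ∈ Finset.range (K + 1), d (i+1) * a (i+1) ^ (δ - 1) + d 0 * a 0 ^ (δ - 1) :=
      Finset.sum_range_succ' _ _
    have peel2 : ∑ i ∈ Finset.range (K + 2), d i = D' + d 0 := Finset.sum_range_succ' _ _
    rw [peel1, peel2]
    have hmono' := mono_phi hδ0 hδ1 ha1 (hmono 0 (by omega)) hD'nonneg hD'le
    calc ∑ i ∈ Finset.range (K + 1), d (i+1) * a (i+1) ^ (δ - 1) + d 0 * a 0 ^ (δ - 1)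
          + (a 0 - (D' + d 0)) * a 0 ^ (δ - 1)
        = (∑ i ∈ Finset.range (K + 1), d (i+1) * a (i+1) ^ (δ - 1)
            + (a 1 - D') * a 1 ^ (δ - 1))
          + ((a 0 - D') * a 0 ^ (δ - 1) - (a 1 - D') * a 1 ^ (δ - 1)) := by ring
      _ ≤ a 1 ^ δ / δ + ((a 0 - D') * a 0 ^ (δ - 1) - (a 1 - D') * a 1 ^ (δ - 1)) := by
          linarith [ihc]
      _ = (a 1 ^ δ / δ - (a 1 - D') * a 1 ^ (δ - 1)) + (a 0 - D') * a 0 ^ (δ - 1) := by ring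
      _ ≤ (a 0 ^ δ / δ - (a 0 - D') * a 0 ^ (δ - 1)) + (a 0 - D') * a 0 ^ (δ - 1) := by
          linarith [hmono']
      _ = a 0 ^ δ / δ := by ring

private lemma key_bound {δ : ℝ} (hδ0 : 0 < δ) (hδ1 : δ ≤ 1) (K : ℕ) (hK : 1 ≤ K)
    (a d : ℕ → ℝ) (ha : ∀ i < K, 0 < a i) (ha1 : a 0 ≤ 1)
    (hmono : ∀ i, i + 1 < K → a (i + 1) ≤ a i)
    (hd : ∀ i < K, 0 ≤ d i)
    (hsuf : ∀ i < K, ∑ j ∈ Finset.Ico i K, d j ≤ a i) :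
    ∑ i ∈ Finset.range K, d i * a i ^ (δ - 1) ≤ 1 / δ := by
  obtain ⟨K', rfl⟩ : ∃ K', K = K' + 1 := ⟨K - 1, by omega⟩
  have h := key_inv hδ0 hδ1 K' a d ha hmono hd hsuf
  have h2 : 0 ≤ (a 0 - ∑ i ∈ Finset.range (K' + 1), d i) * a 0 ^ (δ - 1) := by
    apply mul_nonneg
    · have := hsuf 0 (by omega)
      rw [Finset.range_eq_Ico]
      linarith [this]
    · exact Real.rpow_nonneg (ha 0 (by omega)).le _
  have h4 : a 0 ^ δ ≤ 1 := Real.rpow_le_one (ha 0 (by omega)).le ha1 hδ0.le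
  have h3 : a 0 ^ δ / δ ≤ 1 / δ := by gcongr
  linarith

private lemma stab_halfspace {V : Type*} [Fintype V] [DecidableEq V] (G : SimpleGraph V)
    {x : V → ℝ} (hx : x ∈ STAB G) (U : Finset V) (b : ℝ)
    (hb : ∀ T : Finset V, IsStableSet G T → (((U.filter (· ∈ T)).card : ℝ)) ≤ b) :
    ∑ v ∈ U, x v ≤ b := by
  have hlin : IsLinearMap ℝ (fun y : V → ℝ => ∑ v ∈ U, y v) := by
    constructor
    · intro y z; simp [Finset.sum_add_distrib]
    · intro c y; simp [Finset.mul_sum]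
  have hsub : {y : V → ℝ | ∃ T : Finset V, IsStableSet G T ∧
      y = fun v => if v ∈ T then (1:ℝ) else 0} ⊆ {y | ∑ v ∈ U, y v ≤ b} := by
    rintro y ⟨T, hT, rfl⟩
    simpa [Finset.sum_boole, Finset.filter_mem_eq_inter] using hb T hT
  exact convexHull_min hsub (convex_halfSpace_le hlin b) hx

private lemma uniform_mem_stab {V : Type*} [Fintype V] [DecidableEq V] (G : SimpleGraph V)
    (hn : 1 ≤ Fintype.card V) :
    (fun _ : V => (1 : ℝ) / (Fintype.card V : ℝ)) ∈ STAB G := by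
  have hn0 : (0:ℝ) < (Fintype.card V : ℝ) := by exact_mod_cast hn
  have hmem := Finset.centerMass_mem_convexHull
    (s := {x : V → ℝ | ∃ T : Finset V, IsStableSet G T ∧
      x = fun v => if v ∈ T then (1 : ℝ) else 0}) (univ : Finset V)
    (w := fun _ : V => (1:ℝ)) (fun _ _ => zero_le_one)
    (by simpa [Finset.card_univ] using hn0)
    (z := fun v : V => (fun w : V => if w ∈ ({v} : Finset V) then (1:ℝ) else 0))
    (fun v _ => by
      refine ⟨{v}, ?_, rfl⟩
      intro a ha b hb
      simp only [Finset.mem_singleton] at ha hb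
      subst ha; subst hb; exact G.irrefl)
  suffices h : (fun _ : V => (1 : ℝ) / (Fintype.card V : ℝ))
      = univ.centerMass (fun _ : V => (1:ℝ))
        (fun v : V => (fun w : V => if w ∈ ({v} : Finset V) then (1:ℝ) else 0)) by
    rw [STAB, h]; exact hmem
  funext u
  simp [Finset.centerMass, Finset.card_univ, Finset.sum_apply, Finset.mem_singleton,
    Finset.sum_ite_eq, div_eq_inv_mul]

private lemma jensen_logb {α : Type*} (t : Finset α) (w p : α → ℝ)
    (hw : ∀ i ∈ t, 0 ≤ w i) (h1 : ∑ i ∈ t, w i = 1) (hp : ∀ i ∈ t, 0 < p i) :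
    ∑ i ∈ t, w i * Real.logb 2 (p i) ≤ Real.logb 2 (∑ i ∈ t, w i * p i) := by
  have hcon : ConcaveOn ℝ (Set.Ioi 0) Real.log := strictConcaveOn_log_Ioi.concaveOn
  have h := hcon.le_map_sum hw h1 (fun i hi => Set.mem_Ioi.mpr (hp i hi))
  simp only [smul_eq_mul] at h
  have hlog2 : 0 < Real.log 2 := Real.log_pos one_lt_two
  simp only [Real.logb]
  calc ∑ i ∈ t, w i * (Real.log (p i) / Real.log 2)
      = (∑ i ∈ t, w i * Real.log (p i)) / Real.log 2 := by
        rw [Finset.sum_div]; exact Finset.sum_congr rfl fun i _ => by ring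
    _ ≤ Real.log (∑ i ∈ t, w i * p i) / Real.log 2 :=
        (div_le_div_iff_of_pos_right hlog2).mpr h

set_option maxHeartbeats 1000000

theorem greedy_entropy_bound {V : Type*} [Fintype V] [DecidableEq V]
    (G : SimpleGraph V) (hn : 1 ≤ Fintype.card V) (hG : IsPerfect G)
    {k : ℕ} (S : Fin k → Finset V) (hS : IsGreedySeq G S)
    (δ : ℝ) (hδ0 : 0 < δ) (hδ1 : δ < 1) :
    greedyEntropy S ≤ (1 / (1 - δ)) * (graphEntropy G + Real.logb 2 (1 / δ)) := by
  classical
  obtain ⟨hstab, hdisj, hcover, hmax⟩ := hS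
  have hn0 : (0:ℝ) < (Fintype.card V : ℝ) := by exact_mod_cast hn
  set n : ℕ := Fintype.card V with hn_def
  -- ℕ-indexed classes
  set Si : ℕ → Finset V := fun i => if h : i < k then S ⟨i, h⟩ else ∅ with hSi
  set N : ℕ → ℕ := fun i => (Si i).card with hNdef
  have hSieq : ∀ i : Fin k, Si i.val = S i := by
    intro i; simp [hSi, i.isLt]
  -- class function
  set cl : V → ℕ := fun v => ((hcover v).choose : Fin k).val with hcl
  have hclF : ∀ v : V, v ∈ S (hcover v).choose := fun v => (hcover v).choose_spec
  have hcllt : ∀ v, cl v < k := fun v => ((hcover v).choose).isLt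
  have hmem_iff : ∀ (j : ℕ) (hj : j < k) (v : V), v ∈ Si j ↔ cl v = j := by
    intro j hj v
    have hSij : Si j = S ⟨j, hj⟩ := by simp [hSi, hj]
    rw [hSij]
    constructor
    · intro hv
      by_contra hne
      have hFne : (hcover v).choose ≠ ⟨j, hj⟩ := by
        intro he
        exact hne (by rw [hcl]; simp [he])
      exact (Finset.disjoint_left.mp (hdisj _ _ hFne) (hclF v)) hv
    · intro he
      have heF : (hcover v).choose = ⟨j, hj⟩ := Fin.ext he
      rw [← heF]; exact hclF v
  -- fiberwise sums
  have hfiber : ∀ (i : ℕ), i ≤ k → ∀ (f : V → ℝ),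
      ∑ j ∈ Finset.Ico i k, ∑ v ∈ Si j, f v
        = ∑ v ∈ univ.filter (fun v => i ≤ cl v), f v := by
    intro i hik f
    have hmaps : ∀ v ∈ univ.filter (fun v => i ≤ cl v), cl v ∈ Finset.Ico i k := by
      intro v hv
      simp only [Finset.mem_filter] at hv
      exact Finset.mem_Ico.mpr ⟨hv.2, hcllt v⟩
    rw [← Finset.sum_fiberwise_of_maps_to hmaps f]
    apply Finset.sum_congr rfl
    intro j hj
    rw [Finset.mem_Ico] at hj
    apply Finset.sum_congr ?_ (fun _ _ => rfl)
    ext v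
    rw [Finset.filter_filter, Finset.mem_filter]
    rw [hmem_iff j hj.2 v]
    constructor
    · intro hv; exact ⟨Finset.mem_univ v, by omega, hv⟩
    · intro hv; exact hv.2.2
  have hfiber0 : ∀ f : V → ℝ, ∑ j ∈ Finset.range k, ∑ v ∈ Si j, f v = ∑ v, f v := by
    intro f
    rw [Finset.range_eq_Ico, hfiber 0 (Nat.zero_le k) f]
    apply Finset.sum_congr ?_ (fun _ _ => rfl)
    apply Finset.filter_true_of_mem
    intro v _; exact Nat.zero_le _
  -- sizes are antitone
  have hNsucc : ∀ i, N (i+1) ≤ N i := by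
    intro i
    by_cases h : i + 1 < k
    · have hik : i < k := by omega
      have havoid : ∀ v ∈ S ⟨i+1, h⟩, ∀ j : Fin k, j < ⟨i, hik⟩ → v ∉ S j := by
        intro v hv j hj hvj
        have hne : j ≠ ⟨i+1, h⟩ := by
          intro he
          rw [he, Fin.mk_lt_mk] at hj
          omega
        exact (Finset.disjoint_left.mp (hdisj j ⟨i+1,h⟩ hne) hvj) hv
      have := hmax ⟨i, hik⟩ (S ⟨i+1, h⟩) (hstab _) havoid
      simpa [hNdef, hSi, h, hik] using this
    · have h0 : N (i+1) = 0 := by simp [hNdef, hSi, h]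
      omega
  have hNanti : Antitone N := antitone_nat_of_succ_le hNsucc
  have hNk : N k = 0 := by simp [hNdef, hSi]
  have hex : ∃ i, N i = 0 := ⟨k, hNk⟩
  set K := Nat.find hex with hK
  have hNK : N K = 0 := Nat.find_spec hex
  have hKk : K ≤ k := Nat.find_min' hex hNk
  have hNpos : ∀ i < K, 0 < N i := fun i hi => Nat.pos_of_ne_zero (Nat.find_min hex hi)
  have hNzero : ∀ i, K ≤ i → N i = 0 := fun i hi => Nat.le_zero.mp (hNK ▸ hNanti hi)
  have hSiempty : ∀ i, K ≤ i → Si i = ∅ := fun i hi => Finset.card_eq_zero.mp (hNzero i hi)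
  have hK1 : 1 ≤ K := by
    by_contra h
    have hK0 : K = 0 := by omega
    obtain ⟨v⟩ := Fintype.card_pos_iff.mp (by omega : 0 < Fintype.card V)
    have hv : v ∈ Si (cl v) := (hmem_iff (cl v) (hcllt v) v).mpr rfl
    rw [hSiempty (cl v) (by omega)] at hv
    exact absurd hv (Finset.notMem_empty v)
  -- normalized sizes
  set a : ℕ → ℝ := fun i => (N i : ℝ) / (n : ℝ) with ha_def
  have hsumN : ∑ i ∈ Finset.range k, (N i : ℝ) = (n : ℝ) := by
    calc ∑ i ∈ Finset.range k, (N i : ℝ)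
        = ∑ i ∈ Finset.range k, ∑ v ∈ Si i, (1:ℝ) := by
          apply Finset.sum_congr rfl; intro i _
          simp [hNdef]
      _ = ∑ _v : V, (1:ℝ) := hfiber0 _
      _ = (n : ℝ) := by simp [hn_def]
  have htrunc : ∀ f : ℕ → ℝ, (∀ j, K ≤ j → j < k → f j = 0) →
      ∑ i ∈ Finset.range k, f i = ∑ i ∈ Finset.range K, f i := by
    intro f hf
    rw [← Finset.sum_range_add_sum_Ico f hKk]
    have hz : ∑ j ∈ Finset.Ico K k, f j = 0 := Finset.sum_eq_zero fun j hj => by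
      rw [Finset.mem_Ico] at hj; exact hf j hj.1 hj.2
    rw [hz, add_zero]
  have hsuma : ∑ i ∈ Finset.range K, a i = 1 := by
    rw [← htrunc a (fun j hj _ => by simp [ha_def, hNzero j hj])]
    rw [ha_def, ← Finset.sum_div, hsumN, div_self hn0.ne']
  have hapos : ∀ i < K, 0 < a i := fun i hi => div_pos (by exact_mod_cast hNpos i hi) hn0
  have ha01 : a 0 ≤ 1 := by
    rw [← hsuma]
    apply Finset.single_le_sum (f := a) ?_ (Finset.mem_range.mpr hK1)
    intro i _
    apply div_nonneg (Nat.cast_nonneg _) hn0.le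
  have hamono : ∀ i, i + 1 < K → a (i+1) ≤ a i := by
    intro i _
    show (N (i+1) : ℝ) / (n:ℝ) ≤ (N i : ℝ) / (n:ℝ)
    exact (div_le_div_iff_of_pos_right hn0).mpr (by exact_mod_cast hNsucc i)
  -- main per-point bound
  have hmain : ∀ x ∈ STAB G, (∀ v, 0 < x v) →
      (1 - δ) * greedyEntropy S
        ≤ -(1/(n:ℝ)) * ∑ v, Real.logb 2 (x v) + Real.logb 2 (1/δ) := by
    intro x hxS hxpos
    set c : ℕ → ℝ := fun i => ∑ v ∈ Si i, x v with hc_def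
    set d : ℕ → ℝ := fun i => c i / (n:ℝ) with hd_def
    have hcpos : ∀ i < K, 0 < c i := fun i hi =>
      Finset.sum_pos (fun v _ => hxpos v) (Finset.card_pos.mp (hNpos i hi))
    have hdpos : ∀ i < K, 0 < d i := fun i hi => div_pos (hcpos i hi) hn0
    have hsufc : ∀ i < K, ∑ j ∈ Finset.Ico i K, c j ≤ (N i : ℝ) := by
      intro i hi
      have hik : i < k := lt_of_lt_of_le hi hKk
      have h1 : ∑ j ∈ Finset.Ico i k, ∑ v ∈ Si j, x v
          = ∑ v ∈ univ.filter (fun v => i ≤ cl v), x v := hfiber i hik.le x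
      have h2 : ∑ v ∈ univ.filter (fun v => i ≤ cl v), x v ≤ (N i : ℝ) := by
        apply stab_halfspace G hxS
        intro T hT
        have hstT : IsStableSet G ((univ.filter (fun v => i ≤ cl v)).filter (· ∈ T)) := by
          intro v hv w hw
          simp only [Finset.mem_filter] at hv hw
          exact hT v hv.2 w hw.2
        have havoid : ∀ v ∈ (univ.filter (fun v => i ≤ cl v)).filter (· ∈ T),
            ∀ j : Fin k, j < ⟨i, hik⟩ → v ∉ S j := by
          intro v hv j hj hvS
          simp only [Finset.mem_filter, Finset.mem_univ, true_and] at hv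
          have hveq : cl v = j.val := by
            apply (hmem_iff j.val j.isLt v).mp
            rw [hSieq j]; exact hvS
          rw [Fin.lt_def] at hj
          simp only [] at hj
          omega
        have hcard := hmax ⟨i, hik⟩ _ hstT havoid
        have hNi : N i = (S ⟨i, hik⟩).card := by simp [hNdef, hSi, hik]
        rw [hNi]
        exact_mod_cast hcard
      have h3 : ∑ j ∈ Finset.Ico i K, c j = ∑ j ∈ Finset.Ico i k, c j := by
        rw [← Finset.sum_Ico_consecutive c (le_of_lt hi) hKk]
        have hz : ∑ j ∈ Finset.Ico K k, c j = 0 := Finset.sum_eq_zero fun j hj => by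
          rw [Finset.mem_Ico] at hj
          simp [hc_def, hSiempty j hj.1]
        rw [hz, add_zero]
      calc ∑ j ∈ Finset.Ico i K, c j = ∑ j ∈ Finset.Ico i k, c j := h3
        _ = ∑ v ∈ univ.filter (fun v => i ≤ cl v), x v := h1
        _ ≤ (N i : ℝ) := h2
    have hsufd : ∀ i < K, ∑ j ∈ Finset.Ico i K, d j ≤ a i := by
      intro i hi
      show ∑ j ∈ Finset.Ico i K, c j / (n:ℝ) ≤ (N i : ℝ) / (n:ℝ)
      rw [← Finset.sum_div]
      exact (div_le_div_iff_of_pos_right hn0).mpr (hsufc i hi)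
    have hkey := key_bound hδ0 hδ1.le K hK1 a d hapos ha01 hamono
      (fun i hi => (hdpos i hi).le) hsufd
    -- per-class Jensen
    have hclassJ : ∀ i < K, ∑ v ∈ Si i, Real.logb 2 (x v)
        ≤ (N i : ℝ) * Real.logb 2 (c i / (N i : ℝ)) := by
      intro i hi
      have hNne : (N i : ℝ) ≠ 0 := by
        exact_mod_cast (hNpos i hi).ne'
      have hsum1 : ∑ _v ∈ Si i, ((N i : ℝ))⁻¹ = 1 := by
        rw [Finset.sum_const, nsmul_eq_mul]
        rw [show ((Si i).card : ℝ) = (N i : ℝ) by simp [hNdef]]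
        exact mul_inv_cancel₀ hNne
      have hj := jensen_logb (Si i) (fun _ => ((N i : ℝ))⁻¹) x
        (fun _ _ => inv_nonneg.mpr (Nat.cast_nonneg _)) hsum1 (fun v _ => hxpos v)
      have e1 : ∑ v ∈ Si i, ((N i : ℝ))⁻¹ * x v = c i / (N i : ℝ) := by
        rw [← Finset.mul_sum, inv_mul_eq_div]
      have e2 : ∑ v ∈ Si i, Real.logb 2 (x v)
          = (N i : ℝ) * ∑ v ∈ Si i, ((N i : ℝ))⁻¹ * Real.logb 2 (x v) := by
        rw [Finset.mul_sum]
        apply Finset.sum_congr rfl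
        intro v _
        rw [← mul_assoc, mul_inv_cancel₀ hNne, one_mul]
      rw [e2, ← e1]
      exact mul_le_mul_of_nonneg_left hj (Nat.cast_nonneg _)
    have hxsum : ∑ v, Real.logb 2 (x v)
        ≤ ∑ i ∈ Finset.range K, (N i : ℝ) * Real.logb 2 (c i / (N i : ℝ)) := by
      rw [← hfiber0 (fun v => Real.logb 2 (x v)),
        htrunc _ (fun j hj _ => by simp [hSiempty j hj])]
      exact Finset.sum_le_sum (fun i hi => hclassJ i (Finset.mem_range.mp hi))
    -- greedy entropy rewrite
    have hGE : greedyEntropy S = ∑ i ∈ Finset.range K, a i * Real.logb 2 (1 / a i) := by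
      rw [greedyEntropy, ← hn_def]
      have e0 : ∑ i : Fin k, (((S i).card : ℝ) / (n:ℝ)) * Real.logb 2 ((n:ℝ) / ((S i).card : ℝ))
          = ∑ i ∈ Finset.range k,
              (((N i : ℝ)) / (n:ℝ)) * Real.logb 2 ((n:ℝ) / (N i : ℝ)) := by
        rw [← Fin.sum_univ_eq_sum_range (fun j => (((N j : ℝ)) / (n:ℝ)) * Real.logb 2 ((n:ℝ) / (N j : ℝ))) k]
        apply Finset.sum_congr rfl
        intro i _
        rw [show N i.val = (S i).card by rw [hNdef]; simp only []; rw [hSieq i]]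
      rw [e0, htrunc _ (fun j hj _ => by simp [hNzero j hj])]
      apply Finset.sum_congr rfl
      intro i hi
      have hZ : a i = (N i : ℝ) / (n:ℝ) := rfl
      rw [hZ, one_div_div]
    -- per-term identity and second Jensen
    set z : ℕ → ℝ := fun i => d i / a i * a i ^ (δ - 1) with hz_def
    have hzpos : ∀ i < K, 0 < z i := by
      intro i hi
      apply mul_pos (div_pos (hdpos i hi) (hapos i hi)) (Real.rpow_pos_of_pos (hapos i hi) _)
    have hident : ∀ i < K,
        (1 - δ) * (a i * Real.logb 2 (1 / a i)) - a i * Real.logb 2 (a i / d i)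
          = a i * Real.logb 2 (z i) := by
      intro i hi
      have hane := (hapos i hi).ne'
      have hdne := (hdpos i hi).ne'
      rw [hz_def, one_div, Real.logb_inv,
        Real.logb_mul (div_ne_zero hdne hane) (Real.rpow_pos_of_pos (hapos i hi) _).ne',
        Real.logb_div hdne hane, Real.logb_div hane hdne,
        Real.logb_rpow_eq_mul_logb_of_pos (hapos i hi)]
      ring
    have hjensen2 : ∑ i ∈ Finset.range K, a i * Real.logb 2 (z i) ≤ Real.logb 2 (1/δ) := by
      have hj := jensen_logb (Finset.range K) a z
        (fun i hi => (hapos i (Finset.mem_range.mp hi)).le) hsuma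
        (fun i hi => hzpos i (Finset.mem_range.mp hi))
      have heq : ∑ i ∈ Finset.range K, a i * z i
          = ∑ i ∈ Finset.range K, d i * a i ^ (δ - 1) := by
        apply Finset.sum_congr rfl
        intro i hi
        have hane := (hapos i (Finset.mem_range.mp hi)).ne'
        rw [hz_def]
        field_simp
      have hpos2 : 0 < ∑ i ∈ Finset.range K, a i * z i := by
        apply Finset.sum_pos
        · intro i hi
          exact mul_pos (hapos i (Finset.mem_range.mp hi)) (hzpos i (Finset.mem_range.mp hi))
        · exact ⟨0, Finset.mem_range.mpr hK1⟩
      calc ∑ i ∈ Finset.range K, a i * Real.logb 2 (z i)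
          ≤ Real.logb 2 (∑ i ∈ Finset.range K, a i * z i) := hj
        _ ≤ Real.logb 2 (1/δ) := by
            apply Real.logb_le_logb_of_le one_lt_two hpos2
            rw [heq]; exact hkey
    have hstep : (1-δ) * greedyEntropy S
        - ∑ i ∈ Finset.range K, a i * Real.logb 2 (a i / d i) ≤ Real.logb 2 (1/δ) := by
      rw [hGE]
      calc (1-δ) * (∑ i ∈ Finset.range K, a i * Real.logb 2 (1 / a i))
            - ∑ i ∈ Finset.range K, a i * Real.logb 2 (a i / d i)
          = ∑ i ∈ Finset.range K,
              ((1 - δ) * (a i * Real.logb 2 (1 / a i)) - a i * Real.logb 2 (a i / d i)) := by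
            rw [Finset.mul_sum, ← Finset.sum_sub_distrib]
        _ = ∑ i ∈ Finset.range K, a i * Real.logb 2 (z i) :=
            Finset.sum_congr rfl (fun i hi => hident i (Finset.mem_range.mp hi))
        _ ≤ Real.logb 2 (1/δ) := hjensen2
    have hfinal : ∑ i ∈ Finset.range K, a i * Real.logb 2 (a i / d i)
        ≤ -(1/(n:ℝ)) * ∑ v, Real.logb 2 (x v) := by
      have heq2 : ∑ i ∈ Finset.range K, a i * Real.logb 2 (a i / d i)
          = -(1/(n:ℝ)) * ∑ i ∈ Finset.range K, (N i : ℝ) * Real.logb 2 (c i / (N i : ℝ)) := by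
        rw [Finset.mul_sum]
        apply Finset.sum_congr rfl
        intro i hi
        have hi' := Finset.mem_range.mp hi
        have hNne : (N i : ℝ) ≠ 0 := by exact_mod_cast (hNpos i hi').ne'
        have hcne := (hcpos i hi').ne'
        have had : a i / d i = ((N i : ℝ)) / c i := by
          show (N i : ℝ) / (n:ℝ) / (c i / (n:ℝ)) = ((N i : ℝ)) / c i
          rw [div_div_div_comm, div_self hn0.ne', div_one]
        rw [had, show ((N i : ℝ)) / c i = (c i / (N i : ℝ))⁻¹ by rw [inv_div], Real.logb_inv]
        show (N i : ℝ) / (n:ℝ) * -Real.logb 2 (c i / (N i : ℝ))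
          = -(1/(n:ℝ)) * ((N i : ℝ) * Real.logb 2 (c i / (N i : ℝ)))
        ring
      rw [heq2]
      have hmul : (1/(n:ℝ)) * ∑ v, Real.logb 2 (x v)
          ≤ (1/(n:ℝ)) * ∑ i ∈ Finset.range K, (N i : ℝ) * Real.logb 2 (c i / (N i : ℝ)) :=
        mul_le_mul_of_nonneg_left hxsum (by positivity)
      linarith
    linarith [hstep, hfinal]
  -- conclude via sInf
  have hx0 : (fun _ : V => (1:ℝ)/(n:ℝ)) ∈ STAB G := uniform_mem_stab G hn
  have hcs : (1-δ) * greedyEntropy S - Real.logb 2 (1/δ) ≤ graphEntropy G := by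
    rw [graphEntropy, ← hn_def]
    apply le_csInf
    · exact ⟨_, ⟨_, hx0, fun v => by positivity, rfl⟩⟩
    · rintro b ⟨x, hxS, hxpos, rfl⟩
      have := hmain x hxS hxpos
      linarith
  have h1δ : (0:ℝ) < 1 - δ := by linarith
  rw [show (1/(1-δ)) * (graphEntropy G + Real.logb 2 (1/δ))
      = (graphEntropy G + Real.logb 2 (1/δ)) / (1-δ) by ring]
  rw [le_div_iff₀ h1δ]
  linarith [hcs]
end

section
/- If G is a perfect graph on n ≥ 1 vertices, then H(G) + H(Ḡ) = log₂ n, where Ḡ denotes the complement graph of G. -/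
open Finset

section Comb

variable {V : Type*} [Fintype V] [DecidableEq V]

open scoped Classical in
/-- The finset of all cliques of `G`. -/
noncomputable def cliquesFinset (G : SimpleGraph V) : Finset (Finset V) :=
  Finset.univ.filter (fun K => G.IsClique (K : Set V))

lemma mem_cliquesFinset {G : SimpleGraph V} {K : Finset V} :
    K ∈ cliquesFinset G ↔ G.IsClique (K : Set V) := by
  classical
  simp [cliquesFinset]

lemma cliquesFinset_nonempty (G : SimpleGraph V) : (cliquesFinset G).Nonempty :=
  ⟨∅, mem_cliquesFinset.2 (by simp [SimpleGraph.IsClique])⟩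

/-- max weight of a clique. -/
noncomputable def cliqueWeight (G : SimpleGraph V) (w : V → ℕ) : ℕ :=
  (cliquesFinset G).sup (fun K => ∑ v ∈ K, w v)

lemma le_cliqueWeight {G : SimpleGraph V} {K : Finset V} (hK : G.IsClique (K : Set V))
    (w : V → ℕ) : ∑ v ∈ K, w v ≤ cliqueWeight G w :=
  Finset.le_sup (f := fun K => ∑ v ∈ K, w v) (mem_cliquesFinset.2 hK)

lemma exists_cliqueWeight (G : SimpleGraph V) (w : V → ℕ) :
    ∃ K : Finset V, G.IsClique (K : Set V) ∧ cliqueWeight G w = ∑ v ∈ K, w v := by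
  obtain ⟨K, hK, h⟩ := Finset.exists_mem_eq_sup (cliquesFinset G) (cliquesFinset_nonempty G)
    (fun K => ∑ v ∈ K, w v)
  exact ⟨K, mem_cliquesFinset.1 hK, h⟩

lemma cliqueWeight_le {G : SimpleGraph V} {w : V → ℕ} {t : ℕ}
    (h : ∀ K : Finset V, G.IsClique (K : Set V) → ∑ v ∈ K, w v ≤ t) :
    cliqueWeight G w ≤ t :=
  Finset.sup_le (fun K hK => h K (mem_cliquesFinset.1 hK))

lemma cliqueWeight_mono {G : SimpleGraph V} {w w' : V → ℕ} (h : ∀ v, w v ≤ w' v) :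
    cliqueWeight G w ≤ cliqueWeight G w' :=
  Finset.sup_mono_fun (fun K _ => Finset.sum_le_sum (fun v _ => h v))

lemma single_le_cliqueWeight (G : SimpleGraph V) (w : V → ℕ) (v : V) :
    w v ≤ cliqueWeight G w := by
  have := le_cliqueWeight (G := G) (K := {v}) (by simp [SimpleGraph.IsClique]) w
  simpa using this

/-- number of sets in `L` containing `v`. -/
def mcov (L : Multiset (Finset V)) (v : V) : ℕ :=
  (L.map (fun A => if v ∈ A then 1 else 0)).sum

@[simp] lemma mcov_cons (A : Finset V) (L : Multiset (Finset V)) (v : V) :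
    mcov (A ::ₘ L) v = (if v ∈ A then 1 else 0) + mcov L v := by
  simp [mcov]

@[simp] lemma mcov_zero (v : V) : mcov (0 : Multiset (Finset V)) v = 0 := by simp [mcov]

lemma exists_mem_of_mcov_pos {L : Multiset (Finset V)} {v : V} (h : 1 ≤ mcov L v) :
    ∃ A ∈ L, v ∈ A := by
  induction L using Multiset.induction with
  | empty => simp [mcov] at h
  | cons A L ih =>
    by_cases hv : v ∈ A
    · exact ⟨A, Multiset.mem_cons_self A L, hv⟩
    · simp only [mcov_cons, hv, if_neg, ite_false, zero_add] at h
      obtain ⟨B, hB, hvB⟩ := ih h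
      exact ⟨B, Multiset.mem_cons_of_mem hB, hvB⟩

lemma stable_inter_clique_card {G : SimpleGraph V} {A K : Finset V}
    (hA : IsStableSet G A) (hK : G.IsClique (K : Set V)) :
    (K.filter (· ∈ A)).card ≤ 1 := by
  rw [Finset.card_le_one]
  intro a ha b hb
  simp only [Finset.mem_filter] at ha hb
  by_contra hab
  exact hA a ha.2 b hb.2 (hK ha.1 hb.1 hab)

lemma sum_mcov_eq {L : Multiset (Finset V)} {K : Finset V} :
    ∑ v ∈ K, mcov L v = (L.map (fun A => (K.filter (· ∈ A)).card)).sum := by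
  induction L using Multiset.induction with
  | empty => simp
  | cons A L ih =>
    simp only [mcov_cons, Finset.sum_add_distrib, ih, Multiset.map_cons, Multiset.sum_cons]
    congr 1
    simp [Finset.card_filter]

/-- counting: a stable covering family of `w` has at least `w(K)` members for each clique `K`. -/
lemma clique_le_card {G : SimpleGraph V} {w : V → ℕ} {L : Multiset (Finset V)}
    (hstab : ∀ A ∈ L, IsStableSet G A) (hcov : ∀ v, w v ≤ mcov L v)
    {K : Finset V} (hK : G.IsClique (K : Set V)) :
    ∑ v ∈ K, w v ≤ Multiset.card L := by
  calc ∑ v ∈ K, w v ≤ ∑ v ∈ K, mcov L v := Finset.sum_le_sum (fun v _ => hcov v)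
    _ = (L.map (fun A => (K.filter (· ∈ A)).card)).sum := sum_mcov_eq
    _ ≤ Multiset.card (L.map (fun A => (K.filter (· ∈ A)).card)) • 1 := by
        apply Multiset.sum_le_card_nsmul
        intro x hx
        obtain ⟨A, hA, rfl⟩ := Multiset.mem_map.1 hx
        exact stable_inter_clique_card (hstab A hA) hK
    _ = Multiset.card L := by simp

lemma multiset_all_eq_one {M : Multiset ℕ} (h1 : ∀ x ∈ M, x ≤ 1)
    (h2 : Multiset.card M ≤ M.sum) : ∀ x ∈ M, x = 1 := by
  induction M using Multiset.induction with
  | empty => simp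
  | cons a M ih =>
    have ha := h1 a (Multiset.mem_cons_self a M)
    have hM : Multiset.card M ≤ M.sum := by
      simp only [Multiset.card_cons, Multiset.sum_cons] at h2
      omega
    intro x hx
    rcases Multiset.mem_cons.1 hx with rfl | hx
    · -- a = 1 : from card ≤ sum and all ≤ 1
      have hsum : M.sum ≤ Multiset.card M • 1 := Multiset.sum_le_card_nsmul _ _
        (fun x hx => h1 x (Multiset.mem_cons_of_mem hx))
      simp only [smul_eq_mul, mul_one] at hsum
      simp only [Multiset.card_cons, Multiset.sum_cons] at h2
      omega
    · exact ih (fun x hx => h1 x (Multiset.mem_cons_of_mem hx)) hM x hx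

/-- equality case of the counting argument: if `K` is a clique of full weight, then
every member of the family meets `K` in a positive-weight vertex. -/
lemma eq_case {G : SimpleGraph V} {w : V → ℕ} {L : Multiset (Finset V)}
    (hstab : ∀ A ∈ L, IsStableSet G A) (hcov : ∀ v, w v ≤ mcov L v)
    {K : Finset V} (hK : G.IsClique (K : Set V))
    (hfull : Multiset.card L ≤ ∑ v ∈ K, w v) :
    ∀ A ∈ L, ∃ a ∈ K, a ∈ A ∧ 1 ≤ w a := by
  have h1 : ∑ v ∈ K, w v ≤ ∑ v ∈ K, mcov L v := Finset.sum_le_sum (fun v _ => hcov v)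
  have h2 : (∑ v ∈ K, mcov L v) = (L.map (fun A => (K.filter (· ∈ A)).card)).sum :=
    sum_mcov_eq
  have h3 : (L.map (fun A => (K.filter (· ∈ A)).card)).sum ≤ Multiset.card L := by
    have h := Multiset.sum_le_card_nsmul (L.map (fun A => (K.filter (· ∈ A)).card)) 1
      (fun x hx => by
        obtain ⟨A, hA, rfl⟩ := Multiset.mem_map.1 hx
        exact stable_inter_clique_card (hstab A hA) hK)
    simpa using h
  -- all member cards are 1
  have hall : ∀ x ∈ L.map (fun A => (K.filter (· ∈ A)).card), x = 1 := by
    apply multiset_all_eq_one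
    · intro x hx
      obtain ⟨A, hA, rfl⟩ := Multiset.mem_map.1 hx
      exact stable_inter_clique_card (hstab A hA) hK
    · rw [Multiset.card_map]
      exact hfull.trans (h2 ▸ h1)
  -- pointwise equality of w and mcov on K
  have hpt : ∀ v ∈ K, w v = mcov L v := by
    rw [← Finset.sum_eq_sum_iff_of_le (fun v _ => hcov v)]
    exact le_antisymm h1 (by rw [h2]; exact h3.trans hfull)
  intro A hA
  have hcard : (K.filter (· ∈ A)).card = 1 :=
    hall _ (Multiset.mem_map_of_mem _ hA)
  obtain ⟨a, hafil⟩ := Finset.card_eq_one.1 hcard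
  have haK : a ∈ K ∧ a ∈ A := by
    have : a ∈ K.filter (· ∈ A) := by rw [hafil]; exact Finset.mem_singleton_self a
    simpa using this
  refine ⟨a, haK.1, haK.2, ?_⟩
  rw [hpt a haK.1]
  apply le_trans _ (Multiset.single_le_sum (fun x _ => Nat.zero_le x) _
    (Multiset.mem_map_of_mem (fun B => if a ∈ B then 1 else 0) hA))
  simp [haK.2]

end Comb

lemma one_le_mcov {V : Type*} [DecidableEq V] {L : Multiset (Finset V)} {A : Finset V} {v : V}
    (hA : A ∈ L) (hv : v ∈ A) : 1 ≤ mcov L v := by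
  have h := Multiset.single_le_sum (s := L.map (fun B => if v ∈ B then 1 else 0))
    (fun x _ => Nat.zero_le x) _ (Multiset.mem_map_of_mem (fun B => if v ∈ B then 1 else 0) hA)
  simpa [mcov, hv] using h

section Main
variable {V : Type*} [Fintype V] [DecidableEq V]

lemma singleton_stable (G : SimpleGraph V) (u : V) : IsStableSet G {u} := by
  intro v hv w hw
  simp only [Finset.mem_singleton] at hv hw
  subst hv; subst hw
  exact G.irrefl

lemma base_case {G : SimpleGraph V} (hG : IsPerfect G) (w : V → ℕ) (hw : ∀ v, w v ≤ 1) :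
    ∃ L : Multiset (Finset V), Multiset.card L ≤ cliqueWeight G w ∧
      (∀ A ∈ L, IsStableSet G A) ∧ ∀ v, w v ≤ mcov L v := by
  classical
  set U : Set V := {v | w v = 1} with hU
  set m := (G.induce U).cliqueNum with hm
  have hcol : (G.induce U).Colorable m := by
    rw [← SimpleGraph.chromaticNumber_le_iff_colorable, ← hG U]
  obtain ⟨C⟩ := hcol
  set A : Fin m → Finset V := fun i => univ.filter (fun v => ∃ h : v ∈ U, C ⟨v, h⟩ = i) with hA
  refine ⟨(Finset.univ : Finset (Fin m)).val.map A, ?_, ?_, ?_⟩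
  · -- card = m ≤ cliqueWeight
    rw [Multiset.card_map]
    simp only [Finset.card_val, Finset.card_univ, Fintype.card_fin]
    obtain ⟨K, hK⟩ := (G.induce U).exists_isNClique_cliqueNum
    have hK' : G.IsClique ((K.image Subtype.val : Finset V) : Set V) := by
      intro a ha b hb hab
      simp only [Finset.coe_image, Set.mem_image, Finset.mem_coe] at ha hb
      obtain ⟨a', ha', rfl⟩ := ha
      obtain ⟨b', hb', rfl⟩ := hb
      have hne : a' ≠ b' := fun h => hab (by rw [h])
      exact hK.isClique ha' hb' hne
    have hcard : (K.image Subtype.val).card = m := by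
      rw [Finset.card_image_of_injective _ Subtype.val_injective, hK.card_eq]
    have := le_cliqueWeight hK' w
    have hsum : ∑ v ∈ K.image Subtype.val, w v = m := by
      rw [← hcard, Finset.card_eq_sum_ones]
      apply Finset.sum_congr rfl
      intro a ha
      simp only [Finset.mem_image] at ha
      obtain ⟨a', _, rfl⟩ := ha
      exact a'.2
    omega
  · intro B hB
    obtain ⟨i, _, rfl⟩ := Multiset.mem_map.1 hB
    intro a ha b hb hadj
    simp only [hA, Finset.mem_filter] at ha hb
    obtain ⟨haU, hca⟩ := ha.2
    obtain ⟨hbU, hcb⟩ := hb.2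
    have : (G.induce U).Adj ⟨a, haU⟩ ⟨b, hbU⟩ := hadj
    exact C.valid this (by rw [hca, hcb])
  · intro v
    by_cases hv : w v = 1
    · have hvU : v ∈ U := hv
      have hmem : v ∈ A (C ⟨v, hvU⟩) :=
        Finset.mem_filter.2 ⟨mem_univ v, hvU, rfl⟩
      have := one_le_mcov (Multiset.mem_map_of_mem A (by simp : C ⟨v, hvU⟩ ∈ (Finset.univ : Finset (Fin m)).val)) hmem
      omega
    · have : w v = 0 := by have := hw v; omega
      omega

theorem perfect_weighted_coloring {G : SimpleGraph V} (hG : IsPerfect G) (w : V → ℕ) :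
    ∃ L : Multiset (Finset V), Multiset.card L ≤ cliqueWeight G w ∧
      (∀ A ∈ L, IsStableSet G A) ∧ ∀ v, w v ≤ mcov L v := by
  classical
  obtain ⟨N, hN⟩ : ∃ N, ∑ v, w v ≤ N := ⟨∑ v, w v, le_refl _⟩
  induction N generalizing w with
  | zero =>
    have hz : ∀ v, w v = 0 := by
      intro v
      have : w v ≤ ∑ v, w v := Finset.single_le_sum (fun i _ => Nat.zero_le (w i)) (mem_univ v)
      omega
    exact ⟨0, by simp, by simp, fun v => by simp [hz v]⟩
  | succ N ih =>
    by_cases hbig : ∃ u, 2 ≤ w u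
    · obtain ⟨u, hu⟩ := hbig
      set w' := Function.update w u (w u - 1) with hw'def
      have hw'u : w' u = w u - 1 := Function.update_self u _ w
      have hw'v : ∀ v, v ≠ u → w' v = w v := fun v hv => Function.update_of_ne hv _ w
      have hw'le : ∀ v, w' v ≤ w v := by
        intro v
        by_cases h : v = u
        · subst h; omega
        · rw [hw'v v h]
      have hsum' : ∑ v, w' v < ∑ v, w v := by
        apply Finset.sum_lt_sum (fun i _ => hw'le i)
        exact ⟨u, mem_univ u, by omega⟩
      set t := cliqueWeight G w with htdef
      set t' := cliqueWeight G w' with ht'def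
      have ht' : t' ≤ t := cliqueWeight_mono hw'le
      obtain ⟨L', hcard', hstab', hcov'⟩ := ih w' (by omega)
      rcases eq_or_lt_of_le ht' with heq | hlt
      · -- t' = t
        have hmc : 1 ≤ mcov L' u := le_trans (by omega) (hcov' u)
        obtain ⟨A, hAL, huA⟩ := exists_mem_of_mcov_pos hmc
        set w'' := fun v => w v - (if v ∈ A then 1 else 0) with hw''def
        have ht1 : 1 ≤ t := le_trans (by omega) (single_le_cliqueWeight G w u)
        have hcw'' : cliqueWeight G w'' ≤ t - 1 := by
          apply cliqueWeight_le
          intro K hK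
          have hKle : ∑ v ∈ K, w v ≤ t := le_cliqueWeight hK w
          by_cases hKt : ∑ v ∈ K, w v ≤ t - 1
          · exact le_trans (Finset.sum_le_sum (fun v _ => Nat.sub_le _ _)) hKt
          · have hKfull : ∑ v ∈ K, w v = t := by omega
            have hex : ∃ a, a ∈ K ∧ a ∈ A ∧ 1 ≤ w a := by
              by_cases huK : u ∈ K
              · exact ⟨u, huK, huA, by omega⟩
              · have hKw' : ∑ v ∈ K, w' v = ∑ v ∈ K, w v :=
                  Finset.sum_congr rfl (fun v hv => hw'v v (fun h => huK (h ▸ hv)))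
                have hfull' : Multiset.card L' ≤ ∑ v ∈ K, w' v := by
                  rw [hKw', hKfull]; omega
                obtain ⟨a, haK, haA, haw⟩ := eq_case hstab' hcov' hK hfull' A hAL
                exact ⟨a, haK, haA, le_trans haw (hw'le a)⟩
            obtain ⟨a, haK, haA, haw⟩ := hex
            have hlt2 : ∑ v ∈ K, w'' v < ∑ v ∈ K, w v := by
              apply Finset.sum_lt_sum (fun i _ => Nat.sub_le _ _)
              exact ⟨a, haK, by simp only [hw''def, haA, if_pos]; omega⟩
            omega
        have hsum'' : ∑ v, w'' v ≤ N := by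
          have : ∑ v, w'' v < ∑ v, w v := by
            apply Finset.sum_lt_sum (fun i _ => Nat.sub_le _ _)
            exact ⟨u, mem_univ u, by simp only [hw''def, huA, if_pos]; omega⟩
          omega
        obtain ⟨L'', hcard'', hstab'', hcov''⟩ := ih w'' hsum''
        refine ⟨A ::ₘ L'', ?_, ?_, ?_⟩
        · simp only [Multiset.card_cons]
          omega
        · intro B hB
          rcases Multiset.mem_cons.1 hB with rfl | hB
          · exact hstab' B hAL
          · exact hstab'' B hB
        · intro v
          have h1 : w v ≤ w'' v + (if v ∈ A then 1 else 0) := by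
            simp only [hw''def]
            by_cases h : v ∈ A <;> simp [h] <;> omega
          have h2 := hcov'' v
          rw [mcov_cons]
          omega
      · -- t' < t
        refine ⟨{u} ::ₘ L', ?_, ?_, ?_⟩
        · simp only [Multiset.card_cons]; omega
        · intro B hB
          rcases Multiset.mem_cons.1 hB with rfl | hB
          · exact singleton_stable G u
          · exact hstab' B hB
        · intro v
          rw [mcov_cons]
          by_cases h : v = u
          · subst h
            have h2 := hcov' v
            rw [if_pos (Finset.mem_singleton_self v)]
            rw [hw'def, Function.update_self] at h2
            omega
          · have := hcov' v
            rw [hw'v v h] at this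
            omega
    · push_neg at hbig
      exact base_case hG w (fun v => by have := hbig v; omega)

end Main

section Polytope
variable {V : Type*} [Fintype V] [DecidableEq V]

lemma stabGen_finite (G : SimpleGraph V) :
    {x : V → ℝ | ∃ S : Finset V, IsStableSet G S ∧
      x = fun v => if v ∈ S then (1 : ℝ) else 0}.Finite := by
  apply Set.Finite.subset
    (Set.finite_range (fun S : Finset V => fun v => if v ∈ S then (1:ℝ) else 0))
  rintro x ⟨S, _, rfl⟩
  exact ⟨S, rfl⟩

lemma convex_STAB (G : SimpleGraph V) : Convex ℝ (STAB G) := convex_convexHull ℝ _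

lemma isCompact_STAB (G : SimpleGraph V) : IsCompact (STAB G) :=
  (stabGen_finite G).isCompact_convexHull ℝ

lemma isClosed_STAB (G : SimpleGraph V) : IsClosed (STAB G) :=
  (isCompact_STAB G).isClosed

lemma indicator_mem_STAB {G : SimpleGraph V} {S : Finset V} (hS : IsStableSet G S) :
    (fun v => if v ∈ S then (1:ℝ) else 0) ∈ STAB G :=
  subset_convexHull ℝ _ ⟨S, hS, rfl⟩

lemma STAB_subset_box (G : SimpleGraph V) :
    STAB G ⊆ {x | ∀ v, x v ∈ Set.Icc (0:ℝ) 1} := by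
  apply convexHull_min
  · rintro x ⟨S, _, rfl⟩ v
    by_cases h : v ∈ S <;> simp [h]
  · have : {x : V → ℝ | ∀ v, x v ∈ Set.Icc (0:ℝ) 1}
        = Set.pi Set.univ (fun _ => Set.Icc (0:ℝ) 1) := by
      ext x; simp [Set.mem_pi, Pi.le_def, forall_and]
    rw [this]
    exact convex_pi (fun _ _ => convex_Icc 0 1)

lemma clique_of_stable_compl {G : SimpleGraph V} {C : Finset V} (hC : IsStableSet Gᶜ C) :
    G.IsClique (C : Set V) := by
  intro a ha b hb hab
  by_contra hno
  exact hC a ha b hb ((SimpleGraph.compl_adj G a b).2 ⟨hab, hno⟩)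

lemma stable_compl_of_clique {G : SimpleGraph V} {C : Finset V} (hC : G.IsClique (C : Set V)) :
    IsStableSet Gᶜ C := by
  intro a ha b hb hadj
  rcases (SimpleGraph.compl_adj G a b).1 hadj with ⟨hab, hno⟩
  exact hno (hC ha hb hab)

lemma sum_le_one_of_stable {G : SimpleGraph V} {y : V → ℝ} (hy : y ∈ STAB Gᶜ)
    {S : Finset V} (hS : IsStableSet G S) : ∑ v ∈ S, y v ≤ 1 := by
  have hconv : Convex ℝ {y : V → ℝ | ∑ v ∈ S, y v ≤ 1} := by
    refine convex_halfSpace_le ?_ 1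
    exact { map_add := fun a b => by simp [Finset.sum_add_distrib],
            map_smul := fun c a => by simp [Finset.mul_sum] }
  refine convexHull_min ?_ hconv hy
  rintro x ⟨C, hC, rfl⟩
  have hcard : ((S.filter (· ∈ C)).card : ℝ) ≤ 1 := by
    have : (S.filter (· ∈ C)).card ≤ 1 := by
      rw [Finset.card_le_one]
      intro a ha b hb
      simp only [Finset.mem_filter] at ha hb
      by_contra hab
      exact hS a ha.1 b hb.1 (clique_of_stable_compl hC ha.2 hb.2 hab)
    exact_mod_cast this
  calc ∑ v ∈ S, (if v ∈ C then (1:ℝ) else 0) = ((S.filter (· ∈ C)).card : ℝ) :=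
        by rw [Finset.sum_boole]
    _ ≤ 1 := hcard

lemma pairing_le_one {G : SimpleGraph V} {x y : V → ℝ} (hx : x ∈ STAB G)
    (hy : y ∈ STAB Gᶜ) : ∑ v, x v * y v ≤ 1 := by
  have hconv : Convex ℝ {x : V → ℝ | ∑ v, x v * y v ≤ 1} := by
    refine convex_halfSpace_le ?_ 1
    exact { map_add := fun a b => by
              simp only [Pi.add_apply, add_mul, Finset.sum_add_distrib],
            map_smul := fun c a => by
              simp only [Pi.smul_apply, smul_eq_mul, mul_assoc, Finset.mul_sum] }
  refine convexHull_min ?_ hconv hx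
  rintro z ⟨S, hS, rfl⟩
  simp only [Set.mem_setOf_eq]
  have h : ∀ v, (if v ∈ S then (1:ℝ) else 0) * y v = if v ∈ S then y v else 0 := by
    intro v; split <;> simp
  rw [show (∑ v, (if v ∈ S then (1:ℝ) else 0) * y v) = ∑ v, if v ∈ S then y v else 0 from
    Finset.sum_congr rfl (fun v _ => h v)]
  rw [Finset.sum_ite_mem, Finset.univ_inter]
  exact sum_le_one_of_stable hy hS

lemma clm_eq_sum (f : (V → ℝ) →L[ℝ] ℝ) (x : V → ℝ) :
    f x = ∑ v, x v * f (fun j => if v = j then 1 else 0) := by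
  conv_lhs => rw [pi_eq_sum_univ x, map_sum]
  apply Finset.sum_congr rfl
  intro v _
  rw [map_smul]
  simp [smul_eq_mul]

lemma sum_mcov_mul (L : Multiset (Finset V)) (y : V → ℝ) :
    ∑ v, (mcov L v : ℝ) * y v = (L.map (fun A => ∑ v ∈ A, y v)).sum := by
  induction L using Multiset.induction with
  | empty => simp
  | cons A L ih =>
    simp only [mcov_cons, Multiset.map_cons, Multiset.sum_cons, ← ih]
    push_cast
    have h : ∀ x, ((if x ∈ A then (1:ℝ) else 0) + (mcov L x : ℝ)) * y x
        = (if x ∈ A then y x else 0) + (mcov L x : ℝ) * y x := by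
      intro x; by_cases h : x ∈ A <;> simp [h, add_mul]
    rw [Finset.sum_congr rfl (fun x _ => h x), Finset.sum_add_distrib,
      Finset.sum_ite_mem, Finset.univ_inter]

/-- Key consequence of perfection: a nonnegative vector satisfying all stable-set
inequalities lies in the clique polytope `STAB Gᶜ`. -/
theorem mem_STAB_compl_of_constraints {G : SimpleGraph V} (hG : IsPerfect G)
    {y : V → ℝ} (hy0 : ∀ v, 0 ≤ y v)
    (hyS : ∀ S : Finset V, IsStableSet G S → ∑ v ∈ S, y v ≤ 1) :
    y ∈ STAB Gᶜ := by
  classical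
  by_contra hy
  obtain ⟨f, u, hfu, huy⟩ :=
    geometric_hahn_banach_closed_point (convex_STAB Gᶜ) (isClosed_STAB Gᶜ) hy
  set e : V → (V → ℝ) := fun v => fun j => if v = j then 1 else 0 with he
  set c : V → ℝ := fun v => max (f (e v)) 0 with hc
  have hc0 : ∀ v, 0 ≤ c v := fun v => le_max_right _ _
  have hcite : ∀ v, c v = if 0 < f (e v) then f (e v) else 0 := by
    intro v
    rw [hc]
    split
    · exact max_eq_left (le_of_lt (by assumption))
    · exact max_eq_right (le_of_not_gt (by assumption))
  have hclique : ∀ K : Finset V, G.IsClique (K : Set V) → ∑ v ∈ K, c v < u := by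
    intro K hK
    set K' := K.filter (fun v => 0 < f (e v)) with hK'def
    have hK'cl : G.IsClique (K' : Set V) := hK.subset (by
      rw [hK'def]; exact_mod_cast Finset.coe_subset.2 (Finset.filter_subset _ K))
    have hfK' : f (fun v => if v ∈ K' then (1:ℝ) else 0) < u :=
      hfu _ (indicator_mem_STAB (stable_compl_of_clique hK'cl))
    have heq : f (fun v => if v ∈ K' then (1:ℝ) else 0) = ∑ v ∈ K, c v := by
      rw [clm_eq_sum]
      rw [show (∑ v, (if v ∈ K' then (1:ℝ) else 0) * f (e v))
          = ∑ v, (if v ∈ K' then f (e v) else 0) from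
        Finset.sum_congr rfl (fun v _ => by split <;> simp)]
      rw [Finset.sum_ite_mem, Finset.univ_inter, hK'def, Finset.sum_filter]
      exact Finset.sum_congr rfl (fun v _ => (hcite v).symm)
    rw [← heq]; exact hfK'
  have hpair : u < ∑ v, y v * c v := by
    have h1 : f y = ∑ v, y v * f (e v) := clm_eq_sum f y
    have h2 : ∑ v, y v * f (e v) ≤ ∑ v, y v * c v :=
      Finset.sum_le_sum (fun v _ => mul_le_mul_of_nonneg_left (le_max_left _ _) (hy0 v))
    linarith
  set u' := (cliquesFinset G).sup' (cliquesFinset_nonempty G) (fun K => ∑ v ∈ K, c v) with hu'def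
  have hu'lt : u' < u := by
    rw [hu'def, Finset.sup'_lt_iff]
    exact fun K hK => hclique K (mem_cliquesFinset.1 hK)
  have hu'le : ∀ K : Finset V, G.IsClique (K : Set V) → ∑ v ∈ K, c v ≤ u' :=
    fun K hK => Finset.le_sup' (fun K => ∑ v ∈ K, c v) (mem_cliquesFinset.2 hK)
  have hgap : (0:ℝ) < ∑ v, y v * c v - u' := by linarith
  obtain ⟨M, hM⟩ := exists_nat_gt ((Fintype.card V : ℝ) / (∑ v, y v * c v - u'))
  have hMn : (Fintype.card V : ℝ) < M * (∑ v, y v * c v - u') := by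
    rw [div_lt_iff₀ hgap] at hM
    linarith
  set W : V → ℕ := fun v => ⌈(M:ℝ) * c v⌉₊ with hW
  have hWlb : ∀ v, (M:ℝ) * c v ≤ W v := fun v => Nat.le_ceil _
  have hWub : ∀ v, (W v : ℝ) ≤ M * c v + 1 := by
    intro v
    have := Nat.ceil_lt_add_one (a := (M:ℝ) * c v) (by positivity)
    exact le_of_lt this
  obtain ⟨L, hcard, hstab, hcov⟩ := perfect_weighted_coloring hG W
  obtain ⟨K0, hK0, hK0w⟩ := exists_cliqueWeight G W
  have A1 : ∑ v, (W v : ℝ) * y v ≤ (Multiset.card L : ℝ) := by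
    have s1 : ∑ v, (W v : ℝ) * y v ≤ ∑ v, (mcov L v : ℝ) * y v :=
      Finset.sum_le_sum (fun v _ =>
        mul_le_mul_of_nonneg_right (by exact_mod_cast hcov v) (hy0 v))
    have s2 : (L.map (fun A => ∑ v ∈ A, y v)).sum ≤ (Multiset.card L : ℝ) := by
      have := Multiset.sum_le_card_nsmul (L.map (fun A => ∑ v ∈ A, y v)) 1 (by
        intro x hx
        obtain ⟨A, hA, rfl⟩ := Multiset.mem_map.1 hx
        exact hyS A (hstab A hA))
      simpa using this
    rw [sum_mcov_mul] at s1
    exact s1.trans s2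
  have A2 : (Multiset.card L : ℝ) ≤ ∑ v ∈ K0, (W v : ℝ) := by
    have h := hcard.trans_eq hK0w
    exact_mod_cast h
  have A3 : ∑ v ∈ K0, (W v : ℝ) ≤ M * u' + Fintype.card V := by
    calc ∑ v ∈ K0, (W v : ℝ) ≤ ∑ v ∈ K0, ((M:ℝ) * c v + 1) :=
          Finset.sum_le_sum (fun v _ => hWub v)
      _ = (M:ℝ) * (∑ v ∈ K0, c v) + K0.card := by
          rw [Finset.sum_add_distrib, Finset.mul_sum]; simp
      _ ≤ M * u' + Fintype.card V := by
          have h1 : (∑ v ∈ K0, c v) ≤ u' := hu'le K0 hK0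
          have h2 : (K0.card : ℝ) ≤ Fintype.card V := by
            exact_mod_cast Finset.card_le_card (Finset.subset_univ K0)
          have hM0 : (0:ℝ) ≤ M := Nat.cast_nonneg M
          nlinarith
  have A5 : (M:ℝ) * (∑ v, y v * c v) ≤ ∑ v, (W v : ℝ) * y v := by
    rw [Finset.mul_sum]
    apply Finset.sum_le_sum
    intro v _
    calc (M:ℝ) * (y v * c v) = ((M:ℝ) * c v) * y v := by ring
      _ ≤ (W v : ℝ) * y v := mul_le_mul_of_nonneg_right (hWlb v) (hy0 v)
  have : (M:ℝ) * (∑ v, y v * c v) ≤ M * u' + Fintype.card V := by linarith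
  nlinarith

end Polytope

section Entropy
variable {V : Type*} [Fintype V] [DecidableEq V]

/-- The set of achievable entropy values. -/
def entropySet (G : SimpleGraph V) : Set ℝ :=
  {h : ℝ | ∃ x ∈ STAB G, (∀ v, 0 < x v) ∧
    h = -(1 / (Fintype.card V : ℝ)) * ∑ v, Real.logb 2 (x v)}

lemma graphEntropy_eq_sInf (G : SimpleGraph V) : graphEntropy G = sInf (entropySet G) := rfl

lemma entropySet_bddBelow (G : SimpleGraph V) : BddBelow (entropySet G) := by
  refine ⟨0, ?_⟩
  rintro h ⟨z, hz, hzpos, rfl⟩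
  have hbox := STAB_subset_box G hz
  have hsum : ∑ v, Real.logb 2 (z v) ≤ 0 := by
    apply Finset.sum_nonpos
    intro v _
    exact Real.logb_nonpos one_lt_two (hbox v).1 (hbox v).2
  have hn : (0:ℝ) ≤ 1 / (Fintype.card V : ℝ) := by positivity
  nlinarith

lemma uniform_mem_STAB (G : SimpleGraph V) (hn : 1 ≤ Fintype.card V) :
    (fun _ => (Fintype.card V : ℝ)⁻¹) ∈ STAB G := by
  classical
  have hn0 : (0:ℝ) < Fintype.card V := by exact_mod_cast hn
  have hcm := Finset.centerMass_mem_convexHull (t := (Finset.univ : Finset V))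
    (s := {x : V → ℝ | ∃ S : Finset V, IsStableSet G S ∧
      x = fun v => if v ∈ S then (1 : ℝ) else 0})
    (w := fun _ => (1:ℝ)) (fun i _ => zero_le_one)
    (by simp only [Finset.sum_const, Finset.card_univ, nsmul_eq_mul, mul_one]; exact hn0)
    (z := fun v => fun j => if j ∈ ({v} : Finset V) then (1:ℝ) else 0)
    (fun v _ => ⟨{v}, singleton_stable G v, rfl⟩)
  have heq : (Finset.univ : Finset V).centerMass (fun _ => (1:ℝ))
      (fun v => fun j => if j ∈ ({v} : Finset V) then (1:ℝ) else 0)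
      = fun _ => (Fintype.card V : ℝ)⁻¹ := by
    rw [Finset.centerMass]
    simp only [Finset.sum_const, Finset.card_univ, nsmul_eq_mul, mul_one, one_smul]
    funext j
    simp only [Pi.smul_apply, Finset.sum_apply, smul_eq_mul]
    rw [show (∑ v : V, if j ∈ ({v} : Finset V) then (1:ℝ) else 0) = 1 by
      simp only [Finset.mem_singleton]
      rw [Finset.sum_ite_eq univ j (fun _ => (1:ℝ))]
      simp]
    simp
  rwa [heq] at hcm

lemma exists_maximizer (G : SimpleGraph V) (hn : 1 ≤ Fintype.card V) :
    ∃ x ∈ STAB G, (∀ v, 0 < x v) ∧ (∀ z ∈ STAB G, ∏ v, z v ≤ ∏ v, x v) := by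
  obtain ⟨x, hx, hmax⟩ := (isCompact_STAB G).exists_isMaxOn
    ⟨_, uniform_mem_STAB G hn⟩
    (continuous_finset_prod Finset.univ (fun v _ => continuous_apply v)).continuousOn
    (f := fun z => ∏ v, z v)
  have hn0 : (0:ℝ) < Fintype.card V := by exact_mod_cast hn
  have hu : (0:ℝ) < ∏ _v : V, (Fintype.card V : ℝ)⁻¹ :=
    Finset.prod_pos (fun v _ => by positivity)
  have hpx : (0:ℝ) < ∏ v, x v := lt_of_lt_of_le hu (hmax (uniform_mem_STAB G hn))
  have hxpos : ∀ v, 0 < x v := by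
    intro v
    rcases lt_or_ge 0 (x v) with h | h
    · exact h
    · exfalso
      have h0 : x v = 0 := le_antisymm h (STAB_subset_box G hx v).1
      have : ∏ v, x v = 0 := Finset.prod_eq_zero (Finset.mem_univ v) h0
      rw [this] at hpx
      exact lt_irrefl 0 hpx
  exact ⟨x, hx, hxpos, fun z hz => hmax hz⟩

lemma kkt {G : SimpleGraph V} {x : V → ℝ} (hx : x ∈ STAB G) (hxpos : ∀ v, 0 < x v)
    (hmax : ∀ z ∈ STAB G, ∏ v, z v ≤ ∏ v, x v)
    {S : Finset V} (hS : IsStableSet G S) :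
    ∑ v ∈ S, (x v)⁻¹ ≤ Fintype.card V := by
  classical
  set χ : V → ℝ := fun v => if v ∈ S then 1 else 0 with hχ
  set c : V → ℝ := fun v => (χ v - x v) / x v with hc
  have hcge : ∀ v, -1 ≤ c v := by
    intro v
    have hxv := hxpos v
    have hχ0 : 0 ≤ χ v := by rw [hχ]; dsimp only; split <;> norm_num
    rw [hc]
    dsimp only
    rw [le_div_iff₀ hxv]
    linarith
  have hmem : ∀ t : ℝ, t ∈ Set.Icc (0:ℝ) 1 →
      (fun v => (1-t) * x v + t * χ v) ∈ STAB G := by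
    intro t ht
    have h := (convex_STAB G) hx (indicator_mem_STAB hS)
      (by linarith [ht.2] : (0:ℝ) ≤ 1 - t) ht.1 (by ring)
    have heq2 : (fun v => (1-t) * x v + t * χ v)
        = (1-t) • x + t • (fun v => if v ∈ S then (1:ℝ) else 0) := by
      funext v
      simp [smul_eq_mul, hχ]
    rw [heq2]
    exact h
  have hkey : ∀ t : ℝ, t ∈ Set.Ioo (0:ℝ) 1 → ∑ v, c v / (1 + t * c v) ≤ 0 := by
    intro t ht
    have hpos : ∀ v, 0 < 1 + t * c v := by
      intro v
      have := hcge v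
      nlinarith [ht.1, ht.2]
    have hprod : ∏ v, (1 + t * c v) ≤ 1 := by
      have h1 : ∏ v, ((1-t) * x v + t * χ v) ≤ ∏ v, x v :=
        hmax _ (hmem t ⟨le_of_lt ht.1, le_of_lt ht.2⟩)
      have h2 : ∀ v, (1-t) * x v + t * χ v = x v * (1 + t * c v) := by
        intro v
        have hxv := (hxpos v).ne'
        rw [hc]
        dsimp only
        field_simp
        ring
      rw [Finset.prod_congr rfl (fun v _ => h2 v), Finset.prod_mul_distrib] at h1
      have hxp : 0 < ∏ v, x v := Finset.prod_pos (fun v _ => hxpos v)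
      exact (mul_le_iff_le_one_right hxp).1 h1
    have hlog : ∑ v, Real.log (1 + t * c v) ≤ 0 := by
      rw [← Real.log_prod (fun v _ => (hpos v).ne')]
      exact Real.log_nonpos (le_of_lt (Finset.prod_pos (fun v _ => hpos v))) hprod
    have hterm : ∀ v, t * c v / (1 + t * c v) ≤ Real.log (1 + t * c v) := by
      intro v
      have hp := hpos v
      have h := Real.log_le_sub_one_of_pos (x := (1 + t * c v)⁻¹) (by positivity)
      rw [Real.log_inv] at h
      have heq : 1 - (1 + t*c v)⁻¹ = t * c v / (1 + t * c v) := by field_simp; ring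
      linarith [heq]
    have hsum : t * ∑ v, c v / (1 + t * c v) ≤ 0 := by
      rw [Finset.mul_sum]
      refine le_trans (Finset.sum_le_sum (fun v _ => ?_)) (le_trans
        (Finset.sum_le_sum (fun v _ => hterm v)) hlog)
      rw [mul_div_assoc]
    by_contra hcon
    push_neg at hcon
    exact absurd hsum (not_le.2 (mul_pos ht.1 hcon))
  have hlim : ∑ v, c v ≤ 0 := by
    have htend0 : Filter.Tendsto (fun t : ℝ => ∑ v, c v / (1 + t * c v))
        (nhds 0) (nhds (∑ v, c v / (1 + 0 * c v))) := by
      apply tendsto_finset_sum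
      intro v _
      apply Filter.Tendsto.div tendsto_const_nhds
      · exact (continuous_const.add (continuous_id.mul continuous_const)).tendsto 0
      · simp
    have htend : Filter.Tendsto (fun t : ℝ => ∑ v, c v / (1 + t * c v))
        (nhdsWithin 0 (Set.Ioi 0)) (nhds (∑ v, c v)) := by
      have : (∑ v, c v / (1 + 0 * c v)) = ∑ v, c v := by
        apply Finset.sum_congr rfl; intro v _; norm_num
      rw [← this]
      exact htend0.mono_left nhdsWithin_le_nhds
    have hev : ∀ᶠ t in nhdsWithin (0:ℝ) (Set.Ioi 0),
        (∑ v, c v / (1 + t * c v)) ≤ 0 := by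
      filter_upwards [Ioo_mem_nhdsGT_of_mem (Set.mem_Ico.2 ⟨le_refl (0:ℝ), one_pos⟩)] with t ht
      exact hkey t ht
    exact le_of_tendsto htend hev
  have hceq : ∑ v, c v = ∑ v ∈ S, (x v)⁻¹ - Fintype.card V := by
    rw [hc]
    dsimp only
    have : ∀ v, (χ v - x v) / x v = χ v * (x v)⁻¹ - 1 := by
      intro v
      have hxv := (hxpos v).ne'
      field_simp
    rw [Finset.sum_congr rfl (fun v _ => this v), Finset.sum_sub_distrib]
    congr 1
    · rw [hχ]
      dsimp only
      rw [show (∑ v, (if v ∈ S then (1:ℝ) else 0) * (x v)⁻¹)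
          = ∑ v, (if v ∈ S then (x v)⁻¹ else 0) from
        Finset.sum_congr rfl (fun v _ => by split <;> simp)]
      rw [Finset.sum_ite_mem, Finset.univ_inter]
    · simp
  linarith [hceq ▸ hlim]

end Entropy

section Final
variable {V : Type*} [Fintype V] [DecidableEq V]

lemma graphEntropy_eq_max {G : SimpleGraph V} (hn : 1 ≤ Fintype.card V)
    {x : V → ℝ} (hx : x ∈ STAB G) (hxpos : ∀ v, 0 < x v)
    (hmax : ∀ z ∈ STAB G, ∏ v, z v ≤ ∏ v, x v) :
    graphEntropy G = -(1 / (Fintype.card V : ℝ)) * ∑ v, Real.logb 2 (x v) := by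
  rw [graphEntropy_eq_sInf]
  apply le_antisymm
  · exact csInf_le (entropySet_bddBelow G) ⟨x, hx, hxpos, rfl⟩
  · have hne : (entropySet G).Nonempty := ⟨_, ⟨x, hx, hxpos, rfl⟩⟩
    apply le_csInf hne
    rintro h ⟨z, hz, hzpos, rfl⟩
    have hle : ∑ v, Real.logb 2 (z v) ≤ ∑ v, Real.logb 2 (x v) := by
      have hzp : (0:ℝ) < ∏ v, z v := Finset.prod_pos (fun v _ => hzpos v)
      have hlog : Real.log (∏ v, z v) ≤ Real.log (∏ v, x v) :=
        Real.log_le_log hzp (hmax z hz)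
      rw [Real.log_prod (fun v _ => (hzpos v).ne'),
        Real.log_prod (fun v _ => (hxpos v).ne')] at hlog
      simp only [Real.logb]
      rw [← Finset.sum_div, ← Finset.sum_div]
      exact (div_le_div_iff_of_pos_right (Real.log_pos one_lt_two)).2 hlog
    have hn0 : (0:ℝ) < 1 / (Fintype.card V : ℝ) := by
      have : (0:ℝ) < Fintype.card V := by exact_mod_cast hn
      positivity
    nlinarith

lemma pairing_entropy {G : SimpleGraph V} (hn : 1 ≤ Fintype.card V)
    {x y : V → ℝ} (hx : x ∈ STAB G) (hy : y ∈ STAB Gᶜ)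
    (hxp : ∀ v, 0 < x v) (hyp : ∀ v, 0 < y v) :
    Real.logb 2 (Fintype.card V) ≤
      (-(1 / (Fintype.card V : ℝ)) * ∑ v, Real.logb 2 (x v)) +
      (-(1 / (Fintype.card V : ℝ)) * ∑ v, Real.logb 2 (y v)) := by
  have hn0 : (0:ℝ) < (Fintype.card V : ℝ) := by exact_mod_cast hn
  have h1n : (0:ℝ) < 1 / (Fintype.card V : ℝ) := div_pos one_pos hn0
  have hsum : ∑ v, x v * y v ≤ 1 := pairing_le_one hx hy
  have hgm : ∏ v, (x v * y v) ^ ((1:ℝ)/(Fintype.card V : ℝ))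
      ≤ ∑ v, (1/(Fintype.card V : ℝ)) * (x v * y v) :=
    Real.geom_mean_le_arith_mean_weighted Finset.univ
      (fun _ => 1/(Fintype.card V : ℝ)) (fun v => x v * y v)
      (fun _ _ => h1n.le)
      (by
        rw [Finset.sum_const, Finset.card_univ, nsmul_eq_mul, mul_one_div, div_self hn0.ne'])
      (fun v _ => (mul_pos (hxp v) (hyp v)).le)
  have h2 : ∑ v, (1/(Fintype.card V : ℝ)) * (x v * y v) ≤ 1/(Fintype.card V : ℝ) := by
    rw [← Finset.mul_sum]
    nlinarith
  have hprod : ∏ v, (x v * y v) ^ ((1:ℝ)/(Fintype.card V : ℝ)) ≤ 1/(Fintype.card V : ℝ) :=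
    hgm.trans h2
  have hppos : (0:ℝ) < ∏ v, (x v * y v) ^ ((1:ℝ)/(Fintype.card V : ℝ)) :=
    Finset.prod_pos (fun v _ => Real.rpow_pos_of_pos (mul_pos (hxp v) (hyp v)) _)
  have hlog := Real.log_le_log hppos hprod
  rw [Real.log_prod
    (fun v _ => (Real.rpow_pos_of_pos (mul_pos (hxp v) (hyp v)) _).ne')] at hlog
  have hterm : ∀ v, Real.log ((x v * y v) ^ ((1:ℝ)/(Fintype.card V : ℝ)))
      = (1/(Fintype.card V : ℝ)) * (Real.log (x v) + Real.log (y v)) := by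
    intro v
    rw [Real.log_rpow (mul_pos (hxp v) (hyp v)), Real.log_mul (hxp v).ne' (hyp v).ne']
  rw [Finset.sum_congr rfl (fun v _ => hterm v), ← Finset.mul_sum] at hlog
  rw [show Real.log (1/(Fintype.card V : ℝ)) = -Real.log (Fintype.card V : ℝ) from by
    rw [one_div, Real.log_inv]] at hlog
  rw [Finset.sum_add_distrib] at hlog
  have hL2 : (0:ℝ) < Real.log 2 := Real.log_pos one_lt_two
  have hgoal : Real.log (Fintype.card V : ℝ) ≤
      (-(1/(Fintype.card V : ℝ)) * ∑ v, Real.log (x v)) +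
      (-(1/(Fintype.card V : ℝ)) * ∑ v, Real.log (y v)) := by nlinarith
  have hconv : ∀ z : V → ℝ, ∑ v, Real.logb 2 (z v) = (∑ v, Real.log (z v)) / Real.log 2 := by
    intro z
    simp only [Real.logb]
    rw [Finset.sum_div]
  rw [show Real.logb 2 (Fintype.card V : ℝ) = Real.log (Fintype.card V : ℝ) / Real.log 2
      from rfl, hconv x, hconv y,
    show -(1 / (Fintype.card V : ℝ)) * ((∑ v, Real.log (x v)) / Real.log 2) +
        -(1 / (Fintype.card V : ℝ)) * ((∑ v, Real.log (y v)) / Real.log 2)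
      = ((-(1/(Fintype.card V : ℝ)) * ∑ v, Real.log (x v)) +
        (-(1/(Fintype.card V : ℝ)) * ∑ v, Real.log (y v))) / Real.log 2 from by ring]
  exact (div_le_div_iff_of_pos_right hL2).2 hgoal

end Final

/-- Csiszár–Körner–Lovász–Marton–Simonyi: for a perfect graph `G` on `n ≥ 1`
vertices, `H(G) + H(Ḡ) = log₂ n`. -/
theorem entropy_add_entropy_compl {V : Type*} [Fintype V] [DecidableEq V]
    (G : SimpleGraph V) (hn : 1 ≤ Fintype.card V) (hG : IsPerfect G) :
    graphEntropy G + graphEntropy Gᶜ = Real.logb 2 (Fintype.card V) := by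
  classical
  obtain ⟨x, hx, hxpos, hmax⟩ := exists_maximizer G hn
  have hn0 : (0:ℝ) < (Fintype.card V : ℝ) := by exact_mod_cast hn
  have hHG : graphEntropy G = -(1 / (Fintype.card V : ℝ)) * ∑ v, Real.logb 2 (x v) :=
    graphEntropy_eq_max hn hx hxpos hmax
  set y : V → ℝ := fun v => ((Fintype.card V : ℝ) * x v)⁻¹ with hydef
  have hyp : ∀ v, 0 < y v := fun v => inv_pos.2 (mul_pos hn0 (hxpos v))
  have hyS : ∀ S : Finset V, IsStableSet G S → ∑ v ∈ S, y v ≤ 1 := by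
    intro S hS
    have hk := kkt hx hxpos hmax hS
    have heq : ∑ v ∈ S, y v = (1/(Fintype.card V : ℝ)) * ∑ v ∈ S, (x v)⁻¹ := by
      rw [Finset.mul_sum]
      apply Finset.sum_congr rfl
      intro v _
      rw [hydef]
      dsimp only
      rw [mul_inv, one_div]
    rw [heq]
    calc (1/(Fintype.card V : ℝ)) * ∑ v ∈ S, (x v)⁻¹
        ≤ (1/(Fintype.card V : ℝ)) * (Fintype.card V : ℝ) :=
          mul_le_mul_of_nonneg_left hk (by positivity)
      _ = 1 := by field_simp
  have hymem : y ∈ STAB Gᶜ := mem_STAB_compl_of_constraints hG (fun v => (hyp v).le) hyS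
  have hyval : -(1 / (Fintype.card V : ℝ)) * ∑ v, Real.logb 2 (y v)
      = Real.logb 2 (Fintype.card V) - graphEntropy G := by
    have hterm : ∀ v, Real.logb 2 (y v)
        = -(Real.logb 2 (Fintype.card V) + Real.logb 2 (x v)) := by
      intro v
      rw [hydef]
      dsimp only
      rw [Real.logb_inv, Real.logb_mul hn0.ne' (hxpos v).ne']
    rw [Finset.sum_congr rfl (fun v _ => hterm v)]
    have hsplit : ∑ _v : V, -(Real.logb 2 (Fintype.card V) + Real.logb 2 (x _v))
        = -((Fintype.card V : ℝ) * Real.logb 2 (Fintype.card V)) - ∑ v, Real.logb 2 (x v) := by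
      rw [Finset.sum_neg_distrib, Finset.sum_add_distrib, Finset.sum_const, Finset.card_univ,
        nsmul_eq_mul]
      ring
    rw [hsplit, hHG]
    field_simp
    ring
  have hub : graphEntropy Gᶜ ≤ Real.logb 2 (Fintype.card V) - graphEntropy G := by
    rw [graphEntropy_eq_sInf Gᶜ]
    exact le_trans (csInf_le (entropySet_bddBelow Gᶜ) ⟨y, hymem, hyp, rfl⟩) (le_of_eq hyval)
  have hlb : Real.logb 2 (Fintype.card V) - graphEntropy G ≤ graphEntropy Gᶜ := by
    rw [graphEntropy_eq_sInf Gᶜ]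
    have hne : (entropySet Gᶜ).Nonempty := ⟨_, ⟨y, hymem, hyp, rfl⟩⟩
    apply le_csInf hne
    rintro h ⟨z, hz, hzpos, rfl⟩
    have hp := pairing_entropy hn hx hz hxpos hzpos
    rw [← hHG] at hp
    linarith
  linarith
end

section
/- For any finite poset P on n ≥ 1 elements, the n-dimensional Lebesgue volume of the stable set polytope of its comparability graph equals e(P)/n!, that is, vol(STAB(G(P))) = e(P)/n!. -/
/-- The comparability graph of a partial order `P`: distinct `v, w` are adjacent
iff they are comparable in `P`. -/
def compGraph {V : Type*} (P : PartialOrder V) : SimpleGraph V where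
  Adj v w := v ≠ w ∧ (P.le v w ∨ P.le w v)
  symm := ⟨fun v w h => ⟨h.1.symm, h.2.symm⟩⟩
  loopless := ⟨fun v h => h.1 rfl⟩

/-- The entropy of a poset: the entropy of its comparability graph. -/
noncomputable def posetEntropy {V : Type*} [Fintype V] [DecidableEq V]
    (P : PartialOrder V) : ℝ :=
  graphEntropy (compGraph P)

/-- The number `e(P)` of linear extensions of a finite poset `P`, counted as
order-preserving bijections onto `Fin n`. -/
noncomputable def numLinExt {V : Type*} [Fintype V] (P : PartialOrder V) : ℕ :=
  Nat.card {f : V ≃ Fin (Fintype.card V) // ∀ v w : V, P.le v w → f v ≤ f w}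

section Stanley

variable {V : Type*} [Fintype V] [DecidableEq V]

attribute [local instance] Classical.propDecidable

namespace StanleyAux


lemma exists_sorting_equiv {α : Type*} [Fintype α]
    (key : α → ℝ ×ₗ Fin (Fintype.card α)) (hinj : Function.Injective key) :
    ∃ f : α ≃ Fin (Fintype.card α), ∀ v w, f v ≤ f w ↔ key v ≤ key w := by
  letI : LinearOrder α := LinearOrder.lift' key hinj
  let fIso : α ≃o Fin (Fintype.card α) := (monoEquivOfFin α rfl).symm
  exact ⟨fIso.toEquiv, fun v w => fIso.le_iff_le⟩

variable (P : PartialOrder V)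

noncomputable def pred (v : V) : Finset V := Finset.univ.filter fun w => P.lt w v

noncomputable def Mx (x : V → ℝ) (v : V) : ℝ := (pred P v).fold max 0 x

noncomputable def Tmap (x : V → ℝ) : V → ℝ := fun v => x v - Mx P x v

def isChn (C : Finset V) : Prop := ∀ a ∈ C, ∀ b ∈ C, P.le a b ∨ P.le b a

noncomputable def chainsTo (v : V) : Finset (Finset V) :=
  Finset.univ.filter fun C => v ∈ C ∧ (∀ w ∈ C, P.le w v) ∧ isChn P C

noncomputable def Smap (y : V → ℝ) : V → ℝ :=
  fun v => (chainsTo P v).fold max 0 (fun C => ∑ w ∈ C, y w)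

def Ord : Set (V → ℝ) := {x | (∀ v, 0 ≤ x v ∧ x v ≤ 1) ∧ ∀ v w, P.le v w → x v ≤ x w}

def Chn : Set (V → ℝ) :=
  {x | (∀ v, 0 ≤ x v) ∧ ∀ C : Finset V, isChn P C → ∑ v ∈ C, x v ≤ 1}

variable {P}

lemma lt_of_le_ne {a b : V} (h : P.le a b) (hne : a ≠ b) : P.lt a b := by
  letI := P; exact lt_of_le_of_ne h hne

lemma ple_of_plt {a b : V} (h : P.lt a b) : P.le a b := by
  letI := P; exact le_of_lt h

lemma mem_pred {v w : V} : w ∈ pred P v ↔ P.lt w v := by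
  simp [pred]

lemma Mx_nonneg (x : V → ℝ) (v : V) : 0 ≤ Mx P x v :=
  (Finset.le_fold_max _).2 (Or.inl le_rfl)

lemma le_Mx {x : V → ℝ} {v w : V} (h : w ∈ pred P v) : x w ≤ Mx P x v :=
  (Finset.le_fold_max _).2 (Or.inr ⟨w, h, le_rfl⟩)

lemma Mx_le {x : V → ℝ} {v : V} {c : ℝ} (h0 : 0 ≤ c)
    (h : ∀ w ∈ pred P v, x w ≤ c) : Mx P x v ≤ c :=
  (Finset.fold_max_le _).2 ⟨h0, h⟩

lemma mem_chainsTo {v : V} {C : Finset V} :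
    C ∈ chainsTo P v ↔ v ∈ C ∧ (∀ w ∈ C, P.le w v) ∧ isChn P C := by
  simp [chainsTo]

lemma Smap_nonneg (y : V → ℝ) (v : V) : 0 ≤ Smap P y v :=
  (Finset.le_fold_max _).2 (Or.inl le_rfl)

lemma sum_le_Smap {y : V → ℝ} {v : V} {C : Finset V} (h : C ∈ chainsTo P v) :
    ∑ w ∈ C, y w ≤ Smap P y v :=
  (Finset.le_fold_max _).2 (Or.inr ⟨C, h, le_rfl⟩)

lemma Smap_le {y : V → ℝ} {v : V} {c : ℝ} (h0 : 0 ≤ c)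
    (h : ∀ C ∈ chainsTo P v, ∑ w ∈ C, y w ≤ c) : Smap P y v ≤ c :=
  (Finset.fold_max_le _).2 ⟨h0, h⟩

lemma singleton_mem_chainsTo (v : V) : {v} ∈ chainsTo P v := by
  letI := P
  refine mem_chainsTo.2 ⟨Finset.mem_singleton_self v, ?_, ?_⟩
  · intro w hw; rw [Finset.mem_singleton] at hw; subst hw; exact le_refl _
  · intro a ha b hb
    rw [Finset.mem_singleton] at ha hb; subst ha; subst hb
    exact Or.inl (le_refl _)

/-- a chain has a greatest element (using a linear extension `ℓ` to find it) -/
lemma exists_greatest (ℓ : V ≃ Fin (Fintype.card V))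
    (hℓ : ∀ v w, P.lt v w → ℓ v < ℓ w) {C : Finset V} (hC : isChn P C)
    (hne : C.Nonempty) : ∃ m ∈ C, ∀ u ∈ C, P.le u m := by
  letI := P
  obtain ⟨m, hm, hmax⟩ := C.exists_max_image (fun w => ℓ w) hne
  refine ⟨m, hm, fun u hu => ?_⟩
  rcases hC u hu m hm with h | h
  · exact h
  · by_cases hmu : m = u
    · subst hmu; exact le_refl _
    · exact absurd (hℓ _ _ (lt_of_le_ne h hmu)) (not_lt.2 (hmax u hu))

lemma Smap_mem_Ord {y : V → ℝ} (hy : y ∈ Chn P) : Smap P y ∈ Ord P := by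
  letI := P
  obtain ⟨hy0, hyc⟩ := hy
  refine ⟨fun v => ⟨Smap_nonneg y v, ?_⟩, ?_⟩
  · exact Smap_le zero_le_one fun C hCm => hyc C (mem_chainsTo.1 hCm).2.2
  · intro v w hvw
    refine Smap_le (Smap_nonneg y w) fun C hCm => ?_
    obtain ⟨hvC, hle, hch⟩ := mem_chainsTo.1 hCm
    by_cases hwC : w ∈ C
    · exact sum_le_Smap (mem_chainsTo.2 ⟨hwC, fun u hu => le_trans (hle u hu) hvw, hch⟩)
    · have hmem : insert w C ∈ chainsTo P w := by
        refine mem_chainsTo.2 ⟨Finset.mem_insert_self w C, ?_, ?_⟩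
        · intro u hu
          rcases Finset.mem_insert.1 hu with h | h
          · subst h; exact le_refl _
          · exact le_trans (hle u h) hvw
        · intro a ha b hb
          rcases Finset.mem_insert.1 ha with ha' | ha' <;>
            rcases Finset.mem_insert.1 hb with hb' | hb'
          · subst ha'; subst hb'; exact Or.inl (le_refl _)
          · subst ha'; exact Or.inr (le_trans (hle b hb') hvw)
          · subst hb'; exact Or.inl (le_trans (hle a ha') hvw)
          · exact hch a ha' b hb'
      calc ∑ u ∈ C, y u ≤ ∑ u ∈ insert w C, y u := by
            rw [Finset.sum_insert hwC]
            have := hy0 w; linarith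
        _ ≤ Smap P y w := sum_le_Smap hmem

lemma Tmap_Smap (ℓ : V ≃ Fin (Fintype.card V))
    (hℓ : ∀ v w, P.lt v w → ℓ v < ℓ w) {y : V → ℝ} (hy : y ∈ Chn P) :
    Tmap P (Smap P y) = y := by
  letI := P
  obtain ⟨hy0, _⟩ := hy
  funext v
  have key : Smap P y v = y v + Mx P (Smap P y) v := by
    apply le_antisymm
    · refine Smap_le (by have := hy0 v; have := Mx_nonneg (P := P) (Smap P y) v; linarith) ?_
      intro C hCm
      obtain ⟨hvC, hle, hch⟩ := mem_chainsTo.1 hCm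
      by_cases hC1 : C = {v}
      · subst hC1
        rw [Finset.sum_singleton]
        have := Mx_nonneg (P := P) (Smap P y) v; linarith
      · have hex : ∃ u ∈ C, u ≠ v := by
          by_contra hcon; push_neg at hcon
          exact hC1 (Finset.eq_singleton_iff_unique_mem.2 ⟨hvC, fun u hu => hcon u hu⟩)
        obtain ⟨u, hu, hune⟩ := hex
        have hne : (C.erase v).Nonempty := ⟨u, Finset.mem_erase.2 ⟨hune, hu⟩⟩
        have hch' : isChn P (C.erase v) := fun a ha b hb =>
          hch a (Finset.mem_of_mem_erase ha) b (Finset.mem_of_mem_erase hb)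
        obtain ⟨m, hm, hgr⟩ := exists_greatest ℓ hℓ hch' hne
        have hmv : P.lt m v :=
          lt_of_le_ne (hle m (Finset.mem_of_mem_erase hm)) (Finset.mem_erase.1 hm).1
        have hCm' : C.erase v ∈ chainsTo P m :=
          mem_chainsTo.2 ⟨hm, hgr, hch'⟩
        have h1 : ∑ u ∈ C, y u = y v + ∑ u ∈ C.erase v, y u :=
          (Finset.add_sum_erase _ _ hvC).symm
        rw [h1]
        have h2 : ∑ u ∈ C.erase v, y u ≤ Smap P y m := sum_le_Smap hCm'
        have h3 : Smap P y m ≤ Mx P (Smap P y) v := le_Mx (mem_pred.2 hmv)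
        linarith
    · have h1 : y v ≤ Smap P y v := by
        have := sum_le_Smap (P := P) (y := y) (singleton_mem_chainsTo (P := P) v)
        simpa using this
      have h2 : Mx P (Smap P y) v ≤ Smap P y v - y v := by
        refine Mx_le (by linarith) fun w hw => ?_
        refine Smap_le (by linarith) fun C hCm => ?_
        obtain ⟨hwC, hle, hch⟩ := mem_chainsTo.1 hCm
        have hwv : P.lt w v := mem_pred.1 hw
        have hvC : v ∉ C := fun hvC =>
          absurd (hℓ _ _ (lt_of_le_of_lt (hle v hvC) hwv)) (by simp)
        have hmem : insert v C ∈ chainsTo P v := by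
          refine mem_chainsTo.2 ⟨Finset.mem_insert_self v C, ?_, ?_⟩
          · intro u hu
            rcases Finset.mem_insert.1 hu with h | h
            · subst h; exact le_refl _
            · exact le_trans (hle u h) (le_of_lt hwv)
          · intro a ha b hb
            rcases Finset.mem_insert.1 ha with ha' | ha' <;>
              rcases Finset.mem_insert.1 hb with hb' | hb'
            · subst ha'; subst hb'; exact Or.inl (le_refl _)
            · subst ha'; exact Or.inr (le_trans (hle b hb') (le_of_lt hwv))
            · subst hb'; exact Or.inl (le_trans (hle a ha') (le_of_lt hwv))
            · exact hch a ha' b hb'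
        have := sum_le_Smap (y := y) hmem
        rw [Finset.sum_insert hvC] at this
        linarith
      linarith
  simp only [Tmap]
  linarith [key]

lemma sum_Tmap_le (ℓ : V ≃ Fin (Fintype.card V)) (hℓ : ∀ v w, P.lt v w → ℓ v < ℓ w) {x : V → ℝ} (hx : x ∈ Ord P) :
    ∀ C : Finset V, isChn P C → ∀ m, m ∈ C → (∀ u ∈ C, P.le u m) →
      ∑ u ∈ C, Tmap P x u ≤ x m := by
  letI := P
  intro C
  induction C using Finset.strongInduction with
  | _ C ih =>
    intro hch m hm hgr
    by_cases hC1 : C = {m}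
    · subst hC1
      rw [Finset.sum_singleton]
      have := Mx_nonneg (P := P) x m
      simp only [Tmap]; linarith
    · have hex : ∃ u ∈ C, u ≠ m := by
        by_contra hcon; push_neg at hcon
        exact hC1 (Finset.eq_singleton_iff_unique_mem.2 ⟨hm, fun u hu => hcon u hu⟩)
      obtain ⟨u, hu, hune⟩ := hex
      have hne : (C.erase m).Nonempty := ⟨u, Finset.mem_erase.2 ⟨hune, hu⟩⟩
      have hch' : isChn P (C.erase m) := fun a ha b hb =>
        hch a (Finset.mem_of_mem_erase ha) b (Finset.mem_of_mem_erase hb)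
      obtain ⟨m', hm', hgr'⟩ := exists_greatest ℓ hℓ hch' hne
      have hm'm : P.lt m' m :=
        lt_of_le_ne (hgr m' (Finset.mem_of_mem_erase hm')) (Finset.mem_erase.1 hm').1
      have hih : ∑ u ∈ C.erase m, Tmap P x u ≤ x m' :=
        ih (C.erase m) (Finset.erase_ssubset hm) hch' m' hm' hgr'
      have h1 : ∑ u ∈ C, Tmap P x u = Tmap P x m + ∑ u ∈ C.erase m, Tmap P x u :=
        (Finset.add_sum_erase _ _ hm).symm
      have h2 : x m' ≤ Mx P x m := le_Mx (mem_pred.2 hm'm)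
      rw [h1]
      have hTm : Tmap P x m = x m - Mx P x m := rfl
      linarith

lemma Smap_Tmap (ℓ : V ≃ Fin (Fintype.card V)) (hℓ : ∀ v w, P.lt v w → ℓ v < ℓ w) {x : V → ℝ} (hx : x ∈ Ord P) : Smap P (Tmap P x) = x := by
  letI := P
  funext v
  apply le_antisymm
  · refine Smap_le (hx.1 v).1 fun C hCm => ?_
    obtain ⟨hvC, hle, hch⟩ := mem_chainsTo.1 hCm
    exact sum_Tmap_le ℓ hℓ hx C hch v hvC hle
  · have hwf : WellFounded (P.lt) := (Finite.to_wellFoundedLT).wf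
    have claim : ∀ v : V, ∃ C ∈ chainsTo P v, ∑ u ∈ C, Tmap P x u = x v := by
      intro v
      induction v using hwf.induction with
      | _ v ihv =>
        by_cases hp : pred P v = ∅
        · refine ⟨{v}, singleton_mem_chainsTo v, ?_⟩
          rw [Finset.sum_singleton]
          simp only [Tmap, Mx, hp, Finset.fold_empty]
          ring
        · obtain ⟨w, hw, hmax⟩ := (pred P v).exists_max_image x
            (Finset.nonempty_iff_ne_empty.2 hp)
          have hwv : P.lt w v := mem_pred.1 hw
          have hMx : Mx P x v = x w :=
            le_antisymm (Mx_le (hx.1 w).1 hmax) (le_Mx hw)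
          obtain ⟨C', hC'm, hC's⟩ := ihv w hwv
          obtain ⟨hwC', hle', hch'⟩ := mem_chainsTo.1 hC'm
          have hvC' : v ∉ C' := fun hvC' =>
            absurd (lt_of_le_of_lt (hle' v hvC') hwv) (lt_irrefl v)
          have hmem : insert v C' ∈ chainsTo P v := by
            refine mem_chainsTo.2 ⟨Finset.mem_insert_self v C', ?_, ?_⟩
            · intro u hu
              rcases Finset.mem_insert.1 hu with h | h
              · subst h; exact le_refl _
              · exact le_trans (hle' u h) (le_of_lt hwv)
            · intro a ha b hb
              rcases Finset.mem_insert.1 ha with ha' | ha' <;>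
                rcases Finset.mem_insert.1 hb with hb' | hb'
              · subst ha'; subst hb'; exact Or.inl (le_refl _)
              · subst ha'; exact Or.inr (le_trans (hle' b hb') (le_of_lt hwv))
              · subst hb'; exact Or.inl (le_trans (hle' a ha') (le_of_lt hwv))
              · exact hch' a ha' b hb'
          refine ⟨insert v C', hmem, ?_⟩
          rw [Finset.sum_insert hvC', hC's]
          simp only [Tmap, hMx]; ring
    obtain ⟨C, hCm, hCs⟩ := claim v
    calc x v = ∑ u ∈ C, Tmap P x u := hCs.symm
      _ ≤ Smap P (Tmap P x) v := sum_le_Smap hCm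

lemma stable_indicator_mem_Chn {S : Finset V} (hS : IsStableSet (compGraph P) S) :
    (fun v => if v ∈ S then (1 : ℝ) else 0) ∈ Chn P := by
  constructor
  · intro v; by_cases h : v ∈ S <;> simp [h]
  · intro C hch
    have : ∑ v ∈ C, (if v ∈ S then (1 : ℝ) else 0) = (C.filter (· ∈ S)).card := by
      rw [Finset.sum_boole]
    rw [this]
    have hcard : (C.filter (· ∈ S)).card ≤ 1 := by
      refine Finset.card_le_one.2 fun a ha b hb => ?_
      obtain ⟨haC, haS⟩ := Finset.mem_filter.1 ha
      obtain ⟨hbC, hbS⟩ := Finset.mem_filter.1 hb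
      by_contra hne
      exact hS a haS b hbS ⟨hne, hch a haC b hbC⟩
    exact_mod_cast hcard

lemma STAB_subset_Chn : STAB (compGraph P) ⊆ Chn P := by
  apply convexHull_min
  · rintro x ⟨S, hS, rfl⟩
    exact stable_indicator_mem_Chn hS
  · rintro x hx y hy a b ha hb hab
    constructor
    · intro v
      have := hx.1 v; have := hy.1 v
      have : 0 ≤ a * x v + b * y v := by positivity
      simpa using this
    · intro C hch
      have h1 := hx.2 C hch
      have h2 := hy.2 C hch
      have : ∑ v ∈ C, (a • x + b • y) v = a * ∑ v ∈ C, x v + b * ∑ v ∈ C, y v := by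
        simp [Finset.mul_sum, Finset.sum_add_distrib]
      rw [this]
      nlinarith

lemma Tmap_mem_STAB (ℓ : V ≃ Fin (Fintype.card V))
    (hℓ : ∀ v w, P.lt v w → ℓ v < ℓ w) {x : V → ℝ} (hx : x ∈ Ord P) :
    Tmap P x ∈ STAB (compGraph P) := by
  classical
  -- build the sorting equivalence
  have hκinj : Function.Injective (fun v => toLex (x v, ℓ v) : V → ℝ ×ₗ Fin (Fintype.card V)) := by
    intro v w h
    have h2 : (x v, ℓ v) = (x w, ℓ w) := congrArg ofLex h
    exact ℓ.injective (congrArg Prod.snd h2)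
  obtain ⟨f, hf⟩ := exists_sorting_equiv _ hκinj
  have hfle : ∀ v w, f v ≤ f w ↔
      (x v < x w ∨ (x v = x w ∧ ℓ v ≤ ℓ w)) := fun v w =>
    (hf v w).trans Prod.Lex.le_iff
  have hf1 : ∀ v w, P.le v w → f v ≤ f w := by
    intro v w hvw
    by_cases hvw' : v = w
    · subst hvw'; exact le_refl _
    · have hlt := lt_of_le_ne hvw hvw'
      have hxle : x v ≤ x w := hx.2 v w hvw
      rcases lt_or_eq_of_le hxle with h | h
      · exact (hfle v w).2 (Or.inl h)
      · exact (hfle v w).2 (Or.inr ⟨h, le_of_lt (hℓ v w hlt)⟩)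
  have hf2 : ∀ v w, f v ≤ f w → x v ≤ x w := by
    intro v w h
    rcases (hfle v w).1 h with h | h
    · exact le_of_lt h
    · exact le_of_eq h.1
  -- the sorted values
  set τ : ℕ → ℝ := fun i => if h : i < Fintype.card V then x (f.symm ⟨i, h⟩) else 1 with hτ
  have hτf : ∀ v, τ (f v) = x v := by
    intro v
    have h : ((f v : ℕ)) < Fintype.card V := (f v).isLt
    simp only [hτ, dif_pos h]
    congr 1
    exact f.symm_apply_apply v
  have hτmono : Monotone τ := by
    intro i j hij
    by_cases hi : i < Fintype.card V <;> by_cases hj : j < Fintype.card V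
    · simp only [hτ, dif_pos hi, dif_pos hj]
      apply hf2
      have : f (f.symm ⟨i, hi⟩) = ⟨i, hi⟩ := f.apply_symm_apply _
      have h2 : f (f.symm ⟨j, hj⟩) = ⟨j, hj⟩ := f.apply_symm_apply _
      rw [this, h2]
      exact hij
    · simp only [hτ, dif_pos hi, dif_neg hj]
      exact (hx.1 _).2
    · omega
    · simp [hτ, dif_neg hi, dif_neg hj]
  have hτn : τ (Fintype.card V) = 1 := by simp [hτ]
  have hτ0 : 0 ≤ τ 0 := by
    by_cases h : 0 < Fintype.card V
    · simp only [hτ, dif_pos h]; exact (hx.1 _).1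
    · simp [hτ, dif_neg h]
  -- the weights
  set wt : ℕ → ℝ := fun i => if i = 0 then τ 0 else τ i - τ (i - 1) with hwt
  have hwsum : ∀ k, ∑ i ∈ Finset.range (k + 1), wt i = τ k := by
    intro k
    induction k with
    | zero => simp [hwt]
    | succ k ih =>
      rw [Finset.sum_range_succ, ih]
      simp only [hwt, Nat.succ_ne_zero, if_false]
      simp
  have hw0 : ∀ i, 0 ≤ wt i := by
    intro i
    by_cases h : i = 0
    · simp [hwt, h, hτ0]
    · simp only [hwt, if_neg h]
      have := hτmono (Nat.sub_le i 1)
      linarith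
  have htotal : ∑ i ∈ Finset.range (Fintype.card V + 1), wt i = 1 := by rw [hwsum, hτn]
  -- upsets and antichains
  set U : ℕ → Finset V := fun i => Finset.univ.filter fun v => i ≤ (f v : ℕ) with hU
  set A : ℕ → Finset V := fun i => (U i).filter fun v => ∀ w, P.lt w v → w ∉ U i with hA
  have hmemU : ∀ i v, v ∈ U i ↔ i ≤ (f v : ℕ) := by intro i v; simp [hU]
  have hUup : ∀ i v w, P.lt w v → w ∈ U i → v ∈ U i := by
    intro i v w hlt hw
    rw [hmemU] at hw ⊢
    exact le_trans hw (hf1 w v (ple_of_plt hlt))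
  have hstable : ∀ i, IsStableSet (compGraph P) (A i) := by
    intro i a ha b hb hadj
    obtain ⟨hne, hcomp⟩ := hadj
    have haU : a ∈ U i ∧ ∀ w, P.lt w a → w ∉ U i := by
      have := Finset.mem_filter.1 ha; exact ⟨this.1, this.2⟩
    have hbU : b ∈ U i ∧ ∀ w, P.lt w b → w ∉ U i := by
      have := Finset.mem_filter.1 hb; exact ⟨this.1, this.2⟩
    rcases hcomp with h | h
    · exact hbU.2 a (lt_of_le_ne h hne) haU.1
    · exact haU.2 b (lt_of_le_ne h (Ne.symm hne)) hbU.1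
  -- the three pointwise identities
  have filter_eq : ∀ v : V, (Finset.range (Fintype.card V + 1)).filter (fun i => i ≤ (f v : ℕ))
      = Finset.range ((f v : ℕ) + 1) := by
    intro v
    ext j
    simp only [Finset.mem_filter, Finset.mem_range]
    constructor
    · rintro ⟨_, h2⟩; omega
    · intro h
      have := (f v).isLt
      omega
  have hC1 : ∀ v, x v = ∑ i ∈ Finset.range (Fintype.card V + 1),
      wt i * (if v ∈ U i then 1 else 0) := by
    intro v
    have : ∀ i, wt i * (if v ∈ U i then (1:ℝ) else 0)
        = if i ≤ (f v : ℕ) then wt i else 0 := by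
      intro i
      by_cases h : v ∈ U i
      · rw [if_pos h, if_pos ((hmemU i v).1 h), mul_one]
      · rw [if_neg h, if_neg (fun hc => h ((hmemU i v).2 hc)), mul_zero]
    simp_rw [this]
    rw [← Finset.sum_filter, filter_eq v, hwsum, hτf]
  -- B values
  set Bv : ℕ → V → ℝ := fun i v => if ∃ w ∈ pred P v, w ∈ U i then 1 else 0 with hBv
  have hC2 : ∀ v, Mx P x v = ∑ i ∈ Finset.range (Fintype.card V + 1), wt i * Bv i v := by
    intro v
    by_cases hp : pred P v = ∅
    · have h1 : Mx P x v = 0 := by simp [Mx, hp]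
      have h2 : ∀ i, Bv i v = 0 := by
        intro i
        simp only [hBv, hp]
        rw [if_neg]
        rintro ⟨w, hw, -⟩
        simp at hw
      rw [h1]
      simp [h2]
    · obtain ⟨u, hu, humax⟩ := (pred P v).exists_max_image (fun w => f w)
        (Finset.nonempty_iff_ne_empty.2 hp)
      have hMx : Mx P x v = x u := by
        apply le_antisymm
        · exact Mx_le (hx.1 u).1 fun w hw => hf2 w u (humax w hw)
        · exact le_Mx hu
      have hB : ∀ i, Bv i v = if i ≤ (f u : ℕ) then 1 else 0 := by
        intro i
        simp only [hBv]
        by_cases h : i ≤ (f u : ℕ)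
        · rw [if_pos h, if_pos ⟨u, hu, (hmemU i u).2 h⟩]
        · rw [if_neg h, if_neg]
          rintro ⟨w, hw, hwU⟩
          exact h (le_trans ((hmemU i w).1 hwU) (humax w hw))
      have : ∀ i, wt i * Bv i v = if i ≤ (f u : ℕ) then wt i else 0 := by
        intro i
        rw [hB i]
        by_cases h : i ≤ (f u : ℕ)
        · rw [if_pos h, if_pos h, mul_one]
        · rw [if_neg h, if_neg h, mul_zero]
      simp_rw [this]
      rw [← Finset.sum_filter, filter_eq u, hwsum, hτf, hMx]
  -- z functions
  set z : ℕ → V → ℝ := fun i v => if v ∈ A i then 1 else 0 with hz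
  have hC3 : ∀ i v, (if v ∈ U i then (1:ℝ) else 0) - Bv i v = z i v := by
    intro i v
    simp only [hBv, hz]
    by_cases hvU : v ∈ U i
    · by_cases hex : ∃ w ∈ pred P v, w ∈ U i
      · rw [if_pos hvU, if_pos hex, if_neg]
        · ring
        · intro hvA
          obtain ⟨w, hw, hwU⟩ := hex
          exact (Finset.mem_filter.1 hvA).2 w (mem_pred.1 hw) hwU
      · rw [if_pos hvU, if_neg hex, if_pos]
        · ring
        · exact Finset.mem_filter.2 ⟨hvU, fun w hlt hwU => hex ⟨w, mem_pred.2 hlt, hwU⟩⟩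
    · have hex : ¬ ∃ w ∈ pred P v, w ∈ U i := by
        rintro ⟨w, hw, hwU⟩
        exact hvU (hUup i v w (mem_pred.1 hw) hwU)
      rw [if_neg hvU, if_neg hex, if_neg]
      · ring
      · intro hvA
        exact hvU (Finset.mem_filter.1 hvA).1
  -- Tmap x as a convex combination
  have hTx : ∀ v, Tmap P x v = ∑ i ∈ Finset.range (Fintype.card V + 1), wt i * z i v := by
    intro v
    have : Tmap P x v = x v - Mx P x v := rfl
    rw [this, hC1 v, hC2 v, ← Finset.sum_sub_distrib]
    congr 1
    funext i
    rw [← mul_sub, hC3 i v]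
  -- conclude via centerMass
  have hmem : (Finset.range (Fintype.card V + 1)).centerMass wt z ∈ STAB (compGraph P) := by
    apply Finset.centerMass_mem_convexHull
    · intro i _; exact hw0 i
    · rw [htotal]; norm_num
    · intro i _
      exact ⟨A i, hstable i, rfl⟩
  have heq : (Finset.range (Fintype.card V + 1)).centerMass wt z = Tmap P x := by
    funext v
    rw [Finset.centerMass, htotal]
    simp only [inv_one, one_smul]
    rw [hTx v]
    simp [Finset.sum_apply]
  rw [← heq]
  exact hmem

lemma STAB_eq_image (ℓ : V ≃ Fin (Fintype.card V))
    (hℓ : ∀ v w, P.lt v w → ℓ v < ℓ w) :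
    STAB (compGraph P) = Tmap P '' Ord P := by
  apply Set.Subset.antisymm
  · intro y hy
    have hyC := STAB_subset_Chn hy
    exact ⟨Smap P y, Smap_mem_Ord hyC, Tmap_Smap ℓ hℓ hyC⟩
  · rintro y ⟨x, hx, rfl⟩
    exact Tmap_mem_STAB ℓ hℓ hx

variable (P)

def selP (ℓ : V ≃ Fin (Fintype.card V)) (x : V → ℝ) (v w : V) : Prop :=
  (w ∈ pred P v ∧ ∀ u ∈ pred P v, toLex (x u, ℓ u) ≤ toLex (x w, ℓ w)) ∨
    (pred P v = ∅ ∧ w = v)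

def Rset (ℓ : V ≃ Fin (Fintype.card V)) (σ : V → V) : Set (V → ℝ) :=
  {x | ∀ v, selP P ℓ x v (σ v)}

def admissible (σ : V → V) : Prop := ∀ v, σ v = v ∨ P.lt (σ v) v

variable {P}

lemma sel_unique (ℓ : V ≃ Fin (Fintype.card V)) (x : V → ℝ) (v : V) {w w' : V}
    (h : selP P ℓ x v w) (h' : selP P ℓ x v w') : w = w' := by
  rcases h with ⟨hw, hmax⟩ | ⟨hp, rfl⟩ <;> rcases h' with ⟨hw', hmax'⟩ | ⟨hp', rfl⟩
  · have h1 := hmax w' hw'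
    have h2 := hmax' w hw
    have h3 : toLex (x w, ℓ w) = toLex (x w', ℓ w') := le_antisymm h2 h1
    have h4 : (x w, ℓ w) = (x w', ℓ w') := congrArg ofLex h3
    exact ℓ.injective (congrArg Prod.snd h4)
  · rw [hp'] at hw; simp at hw
  · rw [hp] at hw'; simp at hw'
  · rfl

lemma sel_exists (ℓ : V ≃ Fin (Fintype.card V)) (x : V → ℝ) (v : V) :
    ∃ w, selP P ℓ x v w ∧ (w = v ∨ P.lt w v) := by
  by_cases hp : pred P v = ∅
  · exact ⟨v, Or.inr ⟨hp, rfl⟩, Or.inl rfl⟩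
  · obtain ⟨w, hw, hmax⟩ := (pred P v).exists_max_image
      (fun u => toLex (x u, ℓ u)) (Finset.nonempty_iff_ne_empty.2 hp)
    exact ⟨w, Or.inl ⟨hw, hmax⟩, Or.inr (mem_pred.1 hw)⟩

lemma exists_admissible_Rset (ℓ : V ≃ Fin (Fintype.card V)) (x : V → ℝ) :
    ∃ σ : V → V, admissible P σ ∧ x ∈ Rset P ℓ σ := by
  choose σ h1 h2 using sel_exists ℓ x
  exact ⟨σ, h2, h1⟩

lemma Rset_disjoint (ℓ : V ≃ Fin (Fintype.card V)) {σ τ : V → V} {x : V → ℝ}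
    (hσ : x ∈ Rset P ℓ σ) (hτ : x ∈ Rset P ℓ τ) : σ = τ :=
  funext fun v => sel_unique ℓ x v (hσ v) (hτ v)

lemma measurableSet_selP (ℓ : V ≃ Fin (Fintype.card V)) (v w : V) :
    MeasurableSet {x : V → ℝ | selP P ℓ x v w} := by
  have key : ∀ u : V, MeasurableSet
      {x : V → ℝ | toLex (x u, ℓ u) ≤ toLex (x w, ℓ w)} := by
    intro u
    by_cases h : ℓ u ≤ ℓ w
    · have : {x : V → ℝ | toLex (x u, ℓ u) ≤ toLex (x w, ℓ w)} = {x | x u ≤ x w} := by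
        ext x
        rw [Set.mem_setOf_eq, Prod.Lex.le_iff]
        simp only [Set.mem_setOf_eq]
        constructor
        · rintro (h1 | ⟨h1, -⟩)
          · exact le_of_lt h1
          · exact le_of_eq h1
        · intro h1
          rcases lt_or_eq_of_le h1 with h2 | h2
          · exact Or.inl h2
          · exact Or.inr ⟨h2, h⟩
      rw [this]
      exact measurableSet_le (measurable_pi_apply u) (measurable_pi_apply w)
    · have : {x : V → ℝ | toLex (x u, ℓ u) ≤ toLex (x w, ℓ w)} = {x | x u < x w} := by
        ext x
        rw [Set.mem_setOf_eq, Prod.Lex.le_iff]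
        simp only [Set.mem_setOf_eq]
        constructor
        · rintro (h1 | ⟨-, h1⟩)
          · exact h1
          · exact absurd h1 h
        · exact fun h1 => Or.inl h1
      rw [this]
      exact measurableSet_lt (measurable_pi_apply u) (measurable_pi_apply w)
  have : {x : V → ℝ | selP P ℓ x v w} =
      ((if w ∈ pred P v then
        (⋂ u ∈ pred P v, {x : V → ℝ | toLex (x u, ℓ u) ≤ toLex (x w, ℓ w)})
        else ∅) ∪ (if pred P v = ∅ ∧ w = v then Set.univ else ∅)) := by
    ext x
    simp only [Set.mem_union, Set.mem_setOf_eq, selP]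
    constructor
    · rintro (⟨h1, h2⟩ | ⟨h1, h2⟩)
      · left
        rw [if_pos h1]
        exact Set.mem_biInter fun u hu => h2 u hu
      · right
        rw [if_pos ⟨h1, h2⟩]
        trivial
    · rintro (h1 | h1)
      · by_cases h : w ∈ pred P v
        · rw [if_pos h] at h1
          left
          exact ⟨h, fun u hu => Set.mem_iInter₂.1 h1 u hu⟩
        · rw [if_neg h] at h1
          exact absurd h1 (Set.notMem_empty x)
      · by_cases h : pred P v = ∅ ∧ w = v
        · exact Or.inr h
        · rw [if_neg h] at h1
          exact absurd h1 (Set.notMem_empty x)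
  rw [this]
  apply MeasurableSet.union
  · split_ifs
    · exact MeasurableSet.biInter (Set.to_countable _) fun u _ => key u
    · exact MeasurableSet.empty
  · split_ifs
    · exact MeasurableSet.univ
    · exact MeasurableSet.empty

lemma measurableSet_Rset (ℓ : V ≃ Fin (Fintype.card V)) (σ : V → V) :
    MeasurableSet (Rset P ℓ σ) := by
  have : Rset P ℓ σ = ⋂ v, {x : V → ℝ | selP P ℓ x v (σ v)} := by
    ext x; simp [Rset, Set.mem_iInter]
  rw [this]
  exact MeasurableSet.iInter fun v => measurableSet_selP ℓ v (σ v)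

lemma measurableSet_Ord : MeasurableSet (Ord P) := by
  have : Ord P = (⋂ v, ({x : V → ℝ | 0 ≤ x v} ∩ {x | x v ≤ 1})) ∩
      ⋂ (v) (w), (if P.le v w then {x : V → ℝ | x v ≤ x w} else Set.univ) := by
    ext x
    simp only [Ord, Set.mem_inter_iff, Set.mem_iInter, Set.mem_setOf_eq]
    constructor
    · rintro ⟨h1, h2⟩
      refine ⟨fun v => ⟨(h1 v).1, (h1 v).2⟩, fun v w => ?_⟩
      split_ifs with h
      · exact h2 v w h
      · trivial
    · rintro ⟨h1, h2⟩
      refine ⟨fun v => ⟨(h1 v).1, (h1 v).2⟩, fun v w h => ?_⟩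
      have := h2 v w
      rw [if_pos h] at this
      exact this
  rw [this]
  apply MeasurableSet.inter
  · exact MeasurableSet.iInter fun v =>
      ((measurableSet_le measurable_const (measurable_pi_apply v)).inter
        (measurableSet_le (measurable_pi_apply v) measurable_const))
  · exact MeasurableSet.iInter fun v => MeasurableSet.iInter fun w => by
      split_ifs
      · exact measurableSet_le (measurable_pi_apply v) (measurable_pi_apply w)
      · exact MeasurableSet.univ

noncomputable def Amap (σ : V → V) : (V → ℝ) →ₗ[ℝ] (V → ℝ) :=
  LinearMap.pi fun v =>
    if σ v = v then (LinearMap.proj v : (V → ℝ) →ₗ[ℝ] ℝ)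
    else (LinearMap.proj v : (V → ℝ) →ₗ[ℝ] ℝ) - (LinearMap.proj (σ v) : (V → ℝ) →ₗ[ℝ] ℝ)

lemma Amap_apply (σ : V → V) (x : V → ℝ) (v : V) :
    Amap σ x v = if σ v = v then x v else x v - x (σ v) := by
  simp only [Amap, LinearMap.pi_apply]
  split_ifs <;> simp

lemma Tmap_eq_Amap (ℓ : V ≃ Fin (Fintype.card V)) {σ : V → V} {x : V → ℝ}
    (hx : x ∈ Ord P) (hR : x ∈ Rset P ℓ σ) : Tmap P x = Amap σ x := by
  funext v
  rcases hR v with ⟨hw, hmax⟩ | ⟨hp, heq⟩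
  · have hne : σ v ≠ v := by
      intro h
      rw [h] at hw
      have := mem_pred.1 hw
      exact absurd this (by letI := P; exact lt_irrefl v)
    have hMx : Mx P x v = x (σ v) := by
      apply le_antisymm
      · refine Mx_le (hx.1 (σ v)).1 fun u hu => ?_
        rcases Prod.Lex.le_iff.1 (hmax u hu) with h | h
        · exact le_of_lt h
        · exact le_of_eq h.1
      · exact le_Mx hw
    rw [Amap_apply, if_neg hne]
    simp only [Tmap, hMx]
  · have hMx : Mx P x v = 0 := by simp [Mx, hp]
    rw [Amap_apply, if_pos heq]
    simp only [Tmap, hMx]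
    ring

lemma det_Amap (ℓ : V ≃ Fin (Fintype.card V))
    (hℓ : ∀ v w, P.lt v w → ℓ v < ℓ w) {σ : V → V} (hσ : admissible P σ) :
    LinearMap.det (Amap σ) = 1 := by
  classical
  rw [← LinearMap.det_toMatrix' (Amap σ)]
  rw [← Matrix.det_reindex_self ℓ (LinearMap.toMatrix' (Amap σ))]
  have hentry : ∀ v w : V, LinearMap.toMatrix' (Amap σ) v w =
      (if v = w then 1 else 0) -
        (if σ v ≠ v ∧ σ v = w then 1 else 0) := by
    intro v w
    rw [LinearMap.toMatrix'_apply, Amap_apply]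
    by_cases h : σ v = v
    · simp [h, Pi.single_apply]
    · by_cases h2 : σ v = w
      · have hwv : w ≠ v := fun hh => h (h2.trans hh)
        simp [h, h2, hwv, Ne.symm hwv]
      · simp [h, h2, Pi.single_apply]
  have htri : (Matrix.reindex ℓ ℓ (LinearMap.toMatrix' (Amap σ))).BlockTriangular
      OrderDual.toDual := by
    intro i j hij
    have hij' : i < j := hij
    rw [Matrix.reindex_apply, Matrix.submatrix_apply, hentry]
    have hvw : ℓ.symm i ≠ ℓ.symm j := fun h =>
      absurd (ℓ.symm.injective h) (by intro h'; rw [h'] at hij'; exact lt_irrefl _ hij')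
    rw [if_neg hvw, if_neg]
    · ring
    · rintro ⟨h1, h2⟩
      rcases hσ (ℓ.symm i) with h3 | h3
      · exact h1 h3
      · have h4 : ℓ (σ (ℓ.symm i)) < ℓ (ℓ.symm i) := hℓ _ _ h3
        rw [h2, Equiv.apply_symm_apply, Equiv.apply_symm_apply] at h4
        exact absurd (lt_trans hij' h4) (lt_irrefl _)
  rw [Matrix.det_of_lowerTriangular _ htri]
  have hdiag : ∀ i, (Matrix.reindex ℓ ℓ (LinearMap.toMatrix' (Amap σ))) i i = 1 := by
    intro i
    rw [Matrix.reindex_apply, Matrix.submatrix_apply, hentry]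
    rw [if_pos rfl, if_neg]
    · ring
    · rintro ⟨h1, h2⟩
      exact h1 h2
  simp [hdiag]

lemma volume_Amap_image {σ : V → V} (ℓ : V ≃ Fin (Fintype.card V))
    (hℓ : ∀ v w, P.lt v w → ℓ v < ℓ w) (hσ : admissible P σ) (s : Set (V → ℝ)) :
    MeasureTheory.volume (Amap σ '' s) = MeasureTheory.volume s := by
  rw [MeasureTheory.Measure.addHaar_image_linearMap, det_Amap ℓ hℓ hσ]
  simp

lemma volume_Tmap_image (ℓ : V ≃ Fin (Fintype.card V))
    (hℓ : ∀ v w, P.lt v w → ℓ v < ℓ w) :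
    MeasureTheory.volume (Tmap P '' Ord P) = MeasureTheory.volume (Ord P) := by
  classical
  set admF : Finset (V → V) := Finset.univ.filter (admissible P) with hadmF
  have hmemadm : ∀ σ, σ ∈ admF ↔ admissible P σ := by
    intro σ; simp [hadmF]
  -- measurability of the pieces
  have hmeas : ∀ σ : V → V, MeasurableSet (Ord P ∩ Rset P ℓ σ) := fun σ =>
    measurableSet_Ord.inter (measurableSet_Rset ℓ σ)
  have hAmeas : ∀ σ : V → V, admissible P σ → ∀ s : Set (V → ℝ), MeasurableSet s →
      MeasurableSet (Amap σ '' s) := by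
    intro σ hσ s hs
    have hdet : LinearMap.det (Amap σ) ≠ 0 := by rw [det_Amap ℓ hℓ hσ]; norm_num
    set e := LinearMap.equivOfDetNeZero (Amap σ) hdet with he
    have hco : ∀ x, e x = Amap σ x := fun x => rfl
    have himg : Amap σ '' s = ⇑(e.symm) ⁻¹' s := by
      ext y
      constructor
      · rintro ⟨x, hx, rfl⟩
        show e.symm (Amap σ x) ∈ s
        rw [← hco, e.symm_apply_apply]
        exact hx
      · intro hy
        refine ⟨e.symm y, hy, ?_⟩
        rw [← hco, e.apply_symm_apply]
    rw [himg]
    have hcont : Continuous ⇑(e.symm) :=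
      LinearMap.continuous_of_finiteDimensional (e.symm : (V → ℝ) →ₗ[ℝ] (V → ℝ))
    exact hs.preimage hcont.measurable
  -- the two unions
  have hcover : Tmap P '' Ord P = ⋃ σ ∈ admF, Amap σ '' (Ord P ∩ Rset P ℓ σ) := by
    ext y
    constructor
    · rintro ⟨x, hx, rfl⟩
      obtain ⟨σ, hσ, hxR⟩ := exists_admissible_Rset ℓ x
      refine Set.mem_biUnion ((hmemadm σ).2 hσ) ?_
      exact ⟨x, ⟨hx, hxR⟩, (Tmap_eq_Amap ℓ hx hxR).symm⟩
    · intro hy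
      obtain ⟨σ, hσ, x, ⟨hx, hxR⟩, rfl⟩ := Set.mem_iUnion₂.1 hy
      exact ⟨x, hx, Tmap_eq_Amap ℓ hx hxR⟩
  have hOrdcover : Ord P = ⋃ σ ∈ admF, (Ord P ∩ Rset P ℓ σ) := by
    ext x
    constructor
    · intro hx
      obtain ⟨σ, hσ, hxR⟩ := exists_admissible_Rset ℓ x
      exact Set.mem_biUnion ((hmemadm σ).2 hσ) ⟨hx, hxR⟩
    · intro hx
      obtain ⟨σ, -, hx, -⟩ := Set.mem_iUnion₂.1 hx
      exact hx
  -- disjointness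
  have hdisjR : (↑admF : Set (V → V)).PairwiseDisjoint
      (fun σ => Ord P ∩ Rset P ℓ σ) := by
    intro σ hσ τ hτ hne
    refine Set.disjoint_left.2 fun x ⟨hx1, hx2⟩ ⟨hy1, hy2⟩ => ?_
    exact hne (Rset_disjoint ℓ hx2 hy2)
  have hdisjA : (↑admF : Set (V → V)).PairwiseDisjoint
      (fun σ => Amap σ '' (Ord P ∩ Rset P ℓ σ)) := by
    intro σ hσ τ hτ hne
    refine Set.disjoint_left.2 ?_
    rintro y ⟨x1, ⟨hx1, hx1R⟩, rfl⟩ ⟨x2, ⟨hx2, hx2R⟩, heq⟩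
    have e1 : Tmap P x1 = Amap σ x1 := Tmap_eq_Amap ℓ hx1 hx1R
    have e2 : Tmap P x2 = Amap τ x2 := Tmap_eq_Amap ℓ hx2 hx2R
    have hxx : x1 = x2 := by
      have h1 : Smap P (Tmap P x1) = x1 := Smap_Tmap ℓ hℓ hx1
      have h2 : Smap P (Tmap P x2) = x2 := Smap_Tmap ℓ hℓ hx2
      rw [← h1, ← h2, e1, e2, heq]
    subst hxx
    exact hne (Rset_disjoint ℓ hx1R hx2R)
  rw [hcover]
  rw [MeasureTheory.measure_biUnion_finset hdisjA
    (fun σ hσ => hAmeas σ ((hmemadm σ).1 hσ) _ (hmeas σ))]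
  have : ∀ σ ∈ admF, MeasureTheory.volume (Amap σ '' (Ord P ∩ Rset P ℓ σ))
      = MeasureTheory.volume (Ord P ∩ Rset P ℓ σ) := fun σ hσ =>
    volume_Amap_image ℓ hℓ ((hmemadm σ).1 hσ) _
  rw [Finset.sum_congr rfl this]
  rw [← MeasureTheory.measure_biUnion_finset hdisjR (fun σ _ => hmeas σ)]
  rw [← hOrdcover]

section CubePart

variable (V)

def cubeSet : Set (V → ℝ) := {x | ∀ v, 0 ≤ x v ∧ x v ≤ 1}

def diagSet : Set (V → ℝ) := {x | ∃ v w, v ≠ w ∧ x v = x w}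

variable {V}

def simpSet (f : V ≃ Fin (Fintype.card V)) : Set (V → ℝ) :=
  {x | (∀ v, 0 ≤ x v ∧ x v ≤ 1) ∧ ∀ v w, f v < f w → x v < x w}

open MeasureTheory

lemma volume_cubeSet : volume (cubeSet V) = 1 := by
  have : cubeSet V = Set.pi Set.univ (fun _ : V => Set.Icc (0:ℝ) 1) := by
    ext x
    simp only [cubeSet, Set.mem_setOf_eq, Set.mem_univ_pi, Set.mem_Icc]
  rw [this, volume_pi_pi]
  simp [Real.volume_Icc]

lemma measurableSet_cubeSet : MeasurableSet (cubeSet V) := by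
  have : cubeSet V = ⋂ v, ({x : V → ℝ | 0 ≤ x v} ∩ {x | x v ≤ 1}) := by
    ext x; simp [cubeSet, forall_and]
  rw [this]
  exact MeasurableSet.iInter fun v =>
    ((measurableSet_le measurable_const (measurable_pi_apply v)).inter
      (measurableSet_le (measurable_pi_apply v) measurable_const))

lemma measurableSet_simpSet (f : V ≃ Fin (Fintype.card V)) :
    MeasurableSet (simpSet f) := by
  have : simpSet f = cubeSet V ∩
      ⋂ (v) (w), (if f v < f w then {x : V → ℝ | x v < x w} else Set.univ) := by
    ext x
    simp only [simpSet, cubeSet, Set.mem_inter_iff, Set.mem_setOf_eq, Set.mem_iInter]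
    constructor
    · rintro ⟨h1, h2⟩
      refine ⟨h1, fun v w => ?_⟩
      split_ifs with h
      · exact h2 v w h
      · trivial
    · rintro ⟨h1, h2⟩
      refine ⟨h1, fun v w h => ?_⟩
      have := h2 v w
      rwa [if_pos h] at this
  rw [this]
  refine measurableSet_cubeSet.inter ?_
  exact MeasurableSet.iInter fun v => MeasurableSet.iInter fun w => by
    split_ifs
    · exact measurableSet_lt (measurable_pi_apply v) (measurable_pi_apply w)
    · exact MeasurableSet.univ

lemma volume_diagSet : volume (diagSet V) = 0 := by
  have hsub : diagSet V ⊆ ⋃ (v) (w),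
      (if v ≠ w then {x : V → ℝ | x v = x w} else ∅) := by
    rintro x ⟨v, w, hne, heq⟩
    refine Set.mem_iUnion.2 ⟨v, Set.mem_iUnion.2 ⟨w, ?_⟩⟩
    rw [if_pos hne]
    exact heq
  refine measure_mono_null hsub ?_
  refine measure_iUnion_null fun v => measure_iUnion_null fun w => ?_
  split_ifs with hne
  · have hker : {x : V → ℝ | x v = x w} = (LinearMap.ker
        ((LinearMap.proj v : (V → ℝ) →ₗ[ℝ] ℝ) - LinearMap.proj w) : Set (V → ℝ)) := by
      ext x
      simp only [Set.mem_setOf_eq, SetLike.mem_coe, LinearMap.mem_ker,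
        LinearMap.sub_apply, LinearMap.proj_apply]
      constructor
      · intro h; rw [h]; ring
      · intro h; linarith
    rw [hker]
    apply MeasureTheory.Measure.addHaar_submodule
    intro htop
    have h1 : (fun u => if u = v then (1:ℝ) else 0) ∈ (⊤ : Submodule ℝ (V → ℝ)) :=
      Submodule.mem_top
    rw [← htop, LinearMap.mem_ker] at h1
    simp only [LinearMap.sub_apply, LinearMap.proj_apply] at h1
    rw [if_neg (Ne.symm hne)] at h1
    simp at h1
  · simp

lemma volume_simpSet_eq (f g : V ≃ Fin (Fintype.card V)) :
    volume (simpSet f) = volume (simpSet g) := by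
  set e : V ≃ V := g.trans f.symm with he
  have hfe : ∀ a, f (e a) = g a := fun a => f.apply_symm_apply (g a)
  set φ := MeasurableEquiv.piCongrLeft (fun _ : V => ℝ) e with hφdef
  have hφ : ∀ (x : V → ℝ) (a : V), φ x (e a) = x a := by
    intro x a
    rw [hφdef]
    rw [MeasurableEquiv.coe_piCongrLeft]
    exact Equiv.piCongrLeft_apply_apply (P := fun _ : V => ℝ) (e := e) x a
  have hmp : MeasurePreserving φ volume volume :=
    volume_measurePreserving_piCongrLeft _ e
  have hpre : ⇑φ ⁻¹' (simpSet f) = simpSet g := by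
    ext x
    simp only [Set.mem_preimage, simpSet, Set.mem_setOf_eq]
    constructor
    · rintro ⟨h1, h2⟩
      constructor
      · intro a
        have := h1 (e a)
        rwa [hφ] at this
      · intro a b hab
        have := h2 (e a) (e b) (by rw [hfe, hfe]; exact hab)
        rwa [hφ, hφ] at this
    · rintro ⟨h1, h2⟩
      constructor
      · intro v
        have := h1 (e.symm v)
        rwa [← hφ x (e.symm v), e.apply_symm_apply] at this
      · intro v w hvw
        have hv : f v < f w := hvw
        have h3 : g (e.symm v) < g (e.symm w) := by
          rw [← hfe (e.symm v), ← hfe (e.symm w), e.apply_symm_apply, e.apply_symm_apply]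
          exact hv
        have := h2 (e.symm v) (e.symm w) h3
        rwa [← hφ x (e.symm v), ← hφ x (e.symm w), e.apply_symm_apply,
          e.apply_symm_apply] at this
  calc volume (simpSet f) = volume (⇑φ ⁻¹' (simpSet f)) :=
        (hmp.measure_preimage (measurableSet_simpSet f).nullMeasurableSet).symm
    _ = volume (simpSet g) := by rw [hpre]

lemma equiv_eq_of_compat {f g : V ≃ Fin (Fintype.card V)}
    (h : ∀ v w, f v < f w → g v < g w) : f = g := by
  have hsm : StrictMono (fun i => g (f.symm i)) := by
    intro i j hij
    apply h
    rwa [f.apply_symm_apply, f.apply_symm_apply]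
  have hsurj : Function.Surjective (fun i => g (f.symm i)) :=
    (f.symm.trans g).surjective
  let iso := StrictMono.orderIsoOfSurjective _ hsm hsurj
  have huniq : iso = OrderIso.refl (Fin (Fintype.card V)) := Subsingleton.elim _ _
  have hid : ∀ i, g (f.symm i) = i := by
    intro i
    have h1 : iso i = i := by rw [huniq]; rfl
    have h2 : iso i = g (f.symm i) :=
      congrFun (StrictMono.coe_orderIsoOfSurjective (fun i => g (f.symm i)) hsm hsurj) i
    rw [← h2, h1]
  apply Equiv.ext
  intro v
  have := hid (f v)
  rw [f.symm_apply_apply] at this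
  exact this.symm

lemma simpSet_disjoint {f g : V ≃ Fin (Fintype.card V)} (hne : f ≠ g) :
    Disjoint (simpSet f) (simpSet g) := by
  rw [Set.disjoint_left]
  rintro x ⟨h1, h2⟩ ⟨h3, h4⟩
  apply hne
  apply equiv_eq_of_compat
  intro v w hvw
  have hxvw : x v < x w := h2 v w hvw
  rcases lt_trichotomy (g v) (g w) with h | h | h
  · exact h
  · cases g.injective h
    exact absurd hvw (lt_irrefl _)
  · exact absurd (h4 w v h) (by linarith)

lemma cubeSet_diff_subset :
    cubeSet V \ diagSet V ⊆ ⋃ f : V ≃ Fin (Fintype.card V), simpSet f := by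
  rintro x ⟨hx, hnd⟩
  have hinj : Function.Injective x := by
    intro v w h
    by_contra hne
    exact hnd ⟨v, w, hne, h⟩
  have hκinj : Function.Injective
      (fun v => toLex (x v, (Fintype.equivFin V) v) : V → ℝ ×ₗ Fin (Fintype.card V)) := by
    intro v w h
    have h2 : (x v, (Fintype.equivFin V) v) = (x w, (Fintype.equivFin V) w) :=
      congrArg ofLex h
    exact hinj (congrArg Prod.fst h2)
  obtain ⟨f, hf⟩ := exists_sorting_equiv _ hκinj
  refine Set.mem_iUnion.2 ⟨f, hx, fun v w hvw => ?_⟩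
  have hne : v ≠ w := by
    intro h
    subst h
    exact lt_irrefl _ hvw
  have hnle : ¬ (f w ≤ f v) := not_le.2 hvw
  have : ¬ (x w < x v ∨ (x w = x v ∧ (Fintype.equivFin V) w ≤ (Fintype.equivFin V) v)) := by
    intro hc
    exact hnle ((hf w v).2 (Prod.Lex.le_iff.2 hc))
  push_neg at this
  rcases lt_trichotomy (x v) (x w) with h | h | h
  · exact h
  · exact absurd (hinj h) hne
  · exact absurd h (not_lt.2 this.1)

lemma sum_volume_simpSet :
    ∑ f : V ≃ Fin (Fintype.card V), volume (simpSet f) = 1 := by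
  classical
  have hdisj : (↑(Finset.univ : Finset (V ≃ Fin (Fintype.card V))) :
      Set (V ≃ Fin (Fintype.card V))).PairwiseDisjoint simpSet :=
    fun f _ g _ hne => simpSet_disjoint hne
  rw [← measure_biUnion_finset hdisj (fun f _ => measurableSet_simpSet f)]
  have hsub1 : (⋃ f ∈ (Finset.univ : Finset (V ≃ Fin (Fintype.card V))), simpSet f)
      ⊆ cubeSet V := by
    intro x hx
    obtain ⟨f, -, h1, -⟩ := Set.mem_iUnion₂.1 hx
    exact h1
  have hsub2 : cubeSet V \ diagSet V ⊆
      ⋃ f ∈ (Finset.univ : Finset (V ≃ Fin (Fintype.card V))), simpSet f := by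
    refine Set.Subset.trans cubeSet_diff_subset ?_
    intro x hx
    obtain ⟨f, hf⟩ := Set.mem_iUnion.1 hx
    exact Set.mem_biUnion (Finset.mem_univ f) hf
  apply le_antisymm
  · calc volume (⋃ f ∈ (Finset.univ : Finset (V ≃ Fin (Fintype.card V))), simpSet f)
        ≤ volume (cubeSet V) := measure_mono hsub1
      _ = 1 := volume_cubeSet
  · calc (1 : ENNReal) = volume (cubeSet V) := volume_cubeSet.symm
      _ = volume (cubeSet V \ diagSet V) := (measure_diff_null volume_diagSet).symm
      _ ≤ volume (⋃ f ∈ (Finset.univ : Finset (V ≃ Fin (Fintype.card V))), simpSet f) :=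
          measure_mono hsub2

lemma volume_simpSet (hn : 1 ≤ Fintype.card V) (f : V ≃ Fin (Fintype.card V)) :
    volume (simpSet f) = (((Fintype.card V).factorial : ENNReal))⁻¹ := by
  have hconst : ∀ g : V ≃ Fin (Fintype.card V), volume (simpSet g) = volume (simpSet f) :=
    fun g => volume_simpSet_eq g f
  have hsum := sum_volume_simpSet (V := V)
  rw [Finset.sum_congr rfl (fun g _ => hconst g), Finset.sum_const] at hsum
  have hcard : (Finset.univ : Finset (V ≃ Fin (Fintype.card V))).card
      = (Fintype.card V).factorial := by
    rw [← Fintype.card, Fintype.card_equiv f]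
  rw [hcard] at hsum
  have hnz : ((Fintype.card V).factorial : ENNReal) ≠ 0 := by
    simp [Nat.factorial_ne_zero]
  have hnt : ((Fintype.card V).factorial : ENNReal) ≠ ⊤ := by simp
  have hsum' : ((Fintype.card V).factorial : ENNReal) * volume (simpSet f) = 1 := by
    rw [← hsum]; simp [nsmul_eq_mul]
  calc volume (simpSet f)
      = (((Fintype.card V).factorial : ENNReal))⁻¹ * (((Fintype.card V).factorial : ENNReal))
        * volume (simpSet f) := by rw [ENNReal.inv_mul_cancel hnz hnt, one_mul]
    _ = (((Fintype.card V).factorial : ENNReal))⁻¹ *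
        ((((Fintype.card V).factorial : ENNReal)) * volume (simpSet f)) := by rw [mul_assoc]
    _ = (((Fintype.card V).factorial : ENNReal))⁻¹ := by rw [hsum', mul_one]

end CubePart

lemma exists_linext (P : PartialOrder V) :
    ∃ ℓ : V ≃ Fin (Fintype.card V), ∀ v w, P.lt v w → ℓ v < ℓ w := by
  letI := P
  letI : Fintype (LinearExtension V) := inferInstanceAs (Fintype V)
  have hcard : Fintype.card (LinearExtension V) = Fintype.card V := rfl
  let e : LinearExtension V ≃o Fin (Fintype.card V) :=
    (monoEquivOfFin (LinearExtension V) hcard).symm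
  refine ⟨e.toEquiv, fun v w h => ?_⟩
  have hle : toLinearExtension v ≤ toLinearExtension w :=
    toLinearExtension.monotone (le_of_lt h)
  have hne : toLinearExtension v ≠ toLinearExtension w := by
    intro hh
    have : v = w := congrArg (fun z => z) hh
    rw [this] at h
    exact lt_irrefl _ h
  exact e.lt_iff_lt.2 (lt_of_le_of_ne hle hne)

noncomputable def extF (P : PartialOrder V) : Finset (V ≃ Fin (Fintype.card V)) :=
  Finset.univ.filter (fun f => ∀ v w : V, P.le v w → f v ≤ f w)

lemma mem_extF {f : V ≃ Fin (Fintype.card V)} :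
    f ∈ extF P ↔ ∀ v w : V, P.le v w → f v ≤ f w := by
  simp [extF]

lemma simpSet_subset_Ord {f : V ≃ Fin (Fintype.card V)}
    (hf : ∀ v w : V, P.le v w → f v ≤ f w) : simpSet f ⊆ Ord P := by
  rintro x ⟨h1, h2⟩
  refine ⟨h1, fun v w hvw => ?_⟩
  by_cases hvw' : v = w
  · subst hvw'; exact le_refl _
  · have hfvw : f v < f w :=
      lt_of_le_of_ne (hf v w hvw) (fun hh => hvw' (f.injective hh))
    exact le_of_lt (h2 v w hfvw)

lemma linext_of_inter {f : V ≃ Fin (Fintype.card V)} {x : V → ℝ}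
    (hx : x ∈ Ord P) (hxf : x ∈ simpSet f) : ∀ v w : V, P.le v w → f v ≤ f w := by
  intro v w hvw
  by_contra hc
  have hfwv : f w < f v := not_le.1 hc
  have h1 : x w < x v := hxf.2 w v hfwv
  have h2 : x v ≤ x w := hx.2 v w hvw
  linarith

lemma volume_Ord (hn : 1 ≤ Fintype.card V) :
    MeasureTheory.volume (Ord P) =
      ((extF P).card : ENNReal) * (((Fintype.card V).factorial : ENNReal))⁻¹ := by
  classical
  have hdisj : (↑(extF P) : Set (V ≃ Fin (Fintype.card V))).PairwiseDisjoint simpSet :=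
    fun f _ g _ hne => simpSet_disjoint hne
  have hsub1 : (⋃ f ∈ extF P, simpSet f) ⊆ Ord P := by
    intro x hx
    obtain ⟨f, hf, hxf⟩ := Set.mem_iUnion₂.1 hx
    exact simpSet_subset_Ord (mem_extF.1 hf) hxf
  have hsub2 : Ord P \ diagSet V ⊆ ⋃ f ∈ extF P, simpSet f := by
    rintro x ⟨hx, hnd⟩
    have hxc : x ∈ cubeSet V \ diagSet V := ⟨hx.1, hnd⟩
    obtain ⟨f, hxf⟩ := Set.mem_iUnion.1 (cubeSet_diff_subset hxc)
    exact Set.mem_biUnion (mem_extF.2 (linext_of_inter hx hxf)) hxf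
  have hvol : MeasureTheory.volume (⋃ f ∈ extF P, simpSet f) =
      ((extF P).card : ENNReal) * (((Fintype.card V).factorial : ENNReal))⁻¹ := by
    rw [MeasureTheory.measure_biUnion_finset hdisj (fun f _ => measurableSet_simpSet f)]
    rw [Finset.sum_congr rfl (fun f _ => volume_simpSet hn f), Finset.sum_const]
    simp [nsmul_eq_mul]
  apply le_antisymm
  · calc MeasureTheory.volume (Ord P)
        = MeasureTheory.volume (Ord P \ diagSet V) :=
          (MeasureTheory.measure_diff_null volume_diagSet).symm
      _ ≤ MeasureTheory.volume (⋃ f ∈ extF P, simpSet f) := MeasureTheory.measure_mono hsub2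
      _ = _ := hvol
  · calc ((extF P).card : ENNReal) * (((Fintype.card V).factorial : ENNReal))⁻¹
        = MeasureTheory.volume (⋃ f ∈ extF P, simpSet f) := hvol.symm
      _ ≤ MeasureTheory.volume (Ord P) := MeasureTheory.measure_mono hsub1

lemma numLinExt_eq (P : PartialOrder V) : numLinExt P = (extF P).card := by
  classical
  rw [numLinExt, Nat.card_eq_fintype_card, Fintype.card_subtype]
  rw [extF]

end StanleyAux

end Stanley

open MeasureTheory in
/-- Stanley: the Lebesgue volume of the stable set polytope of the comparability
graph of `P` (i.e. the chain polytope of `P`) equals `e(P)/n!`. -/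
theorem volume_STAB_compGraph {V : Type*} [Fintype V] [DecidableEq V]
    (P : PartialOrder V) (hn : 1 ≤ Fintype.card V) :
    volume (STAB (compGraph P)) =
      ENNReal.ofReal ((numLinExt P : ℝ) / (Nat.factorial (Fintype.card V) : ℝ)) := by
  classical
  obtain ⟨ℓ, hℓ⟩ := StanleyAux.exists_linext P
  rw [StanleyAux.STAB_eq_image ℓ hℓ, StanleyAux.volume_Tmap_image ℓ hℓ,
    StanleyAux.volume_Ord hn, StanleyAux.numLinExt_eq P]
  have hpos : (0:ℝ) < (Nat.factorial (Fintype.card V) : ℝ) := by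
    exact_mod_cast Nat.factorial_pos _
  rw [ENNReal.ofReal_div_of_pos hpos, ENNReal.ofReal_natCast, ENNReal.ofReal_natCast,
    div_eq_mul_inv]
end

section
/- Let P be a finite poset on ground set V. A vector x ∈ ℝ^V belongs to STAB(G(P)) if and only if there exist functions y⁻, y⁺ : V → ℝ such that: (i) x_v = y⁺_v − y⁻_v and y⁻_v ≤ y⁺_v for all v ∈ V; (ii) 0 ≤ y⁻_v for every minimal element v of P; (iii) y⁺_v ≤ 1 for every maximal element v of P; and (iv) y⁺_v ≤ y⁻_w whenever v is covered by w in P (v <_P w with no element strictly between). -/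
section AuxPotential
variable {V : Type*} [Fintype V] [DecidableEq V] [PO : PartialOrder V]


lemma aux_lt_imp (ym yp : V → ℝ)
    (hle : ∀ v, ym v ≤ yp v)
    (hcov : ∀ v w : V, v < w → (∀ z, ¬(v < z ∧ z < w)) → yp v ≤ ym w) :
    ∀ v w : V, v < w → yp v ≤ ym w := by
  classical
  have key : ∀ n (v w : V),
      (Finset.univ.filter fun z => v < z ∧ z < w).card = n → v < w → yp v ≤ ym w := by
    intro n
    induction n using Nat.strong_induction_on with
    | _ n ih =>
      intro v w hcard hvw
      rcases Finset.eq_empty_or_nonempty (Finset.univ.filter fun z => v < z ∧ z < w)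
        with he | hne
      · refine hcov v w hvw fun z hz => ?_
        have := Finset.eq_empty_iff_forall_notMem.mp he z
        simp only [Finset.mem_filter, Finset.mem_univ, true_and] at this
        exact this hz
      · obtain ⟨z, hz⟩ := hne
        have hzmem := hz
        simp only [Finset.mem_filter, Finset.mem_univ, true_and] at hz
        obtain ⟨hvz, hzw⟩ := hz
        have hnpos : 0 < n := by
          rw [← hcard]; exact Finset.card_pos.mpr ⟨z, hzmem⟩
        have hsub1 : (Finset.univ.filter fun t => v < t ∧ t < z) ⊆
            (Finset.univ.filter fun t => v < t ∧ t < w).erase z := by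
          intro t ht
          simp only [Finset.mem_filter, Finset.mem_univ, true_and] at ht
          refine Finset.mem_erase.mpr ⟨ne_of_lt ht.2, ?_⟩
          simp only [Finset.mem_filter, Finset.mem_univ, true_and]
          exact ⟨ht.1, ht.2.trans hzw⟩
        have hsub2 : (Finset.univ.filter fun t => z < t ∧ t < w) ⊆
            (Finset.univ.filter fun t => v < t ∧ t < w).erase z := by
          intro t ht
          simp only [Finset.mem_filter, Finset.mem_univ, true_and] at ht
          refine Finset.mem_erase.mpr ⟨(ne_of_lt ht.1).symm, ?_⟩
          simp only [Finset.mem_filter, Finset.mem_univ, true_and]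
          exact ⟨hvz.trans ht.1, ht.2⟩
        have hcard1 : (Finset.univ.filter fun t => v < t ∧ t < z).card < n := by
          calc (Finset.univ.filter fun t => v < t ∧ t < z).card
              ≤ ((Finset.univ.filter fun t => v < t ∧ t < w).erase z).card :=
                Finset.card_le_card hsub1
            _ < n := by rw [Finset.card_erase_of_mem hzmem, hcard]; omega
        have hcard2 : (Finset.univ.filter fun t => z < t ∧ t < w).card < n := by
          calc (Finset.univ.filter fun t => z < t ∧ t < w).card
              ≤ ((Finset.univ.filter fun t => v < t ∧ t < w).erase z).card :=
                Finset.card_le_card hsub2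
            _ < n := by rw [Finset.card_erase_of_mem hzmem, hcard]; omega
        calc yp v ≤ ym z := ih _ hcard1 v z rfl hvz
          _ ≤ yp z := hle z
          _ ≤ ym w := ih _ hcard2 z w rfl hzw
  intro v w h
  exact key _ v w rfl h

lemma aux_nonneg (ym yp : V → ℝ) (hle : ∀ v, ym v ≤ yp v)
    (hmin : ∀ v, (∀ z : V, z ≤ v → z = v) → 0 ≤ ym v)
    (hlt : ∀ v w : V, v < w → yp v ≤ ym w) : ∀ v, 0 ≤ ym v := by
  classical
  intro v
  obtain ⟨m, hm, hmmin⟩ := (Finset.univ.filter fun z : V => z ≤ v).exists_minimal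
    ⟨v, by simp⟩
  simp only [Finset.mem_filter, Finset.mem_univ, true_and] at hm
  have hmin' : ∀ z, z ≤ m → z = m := by
    intro z hzm
    by_contra h
    exact h (le_antisymm hzm (hmmin (by simpa using hzm.trans hm) hzm))
  have h0 : 0 ≤ ym m := hmin m hmin'
  rcases eq_or_lt_of_le hm with rfl | hlt'
  · exact h0
  · exact h0.trans ((hle m).trans (hlt m v hlt'))

lemma aux_le_one (ym yp : V → ℝ) (hle : ∀ v, ym v ≤ yp v)
    (hmax : ∀ v, (∀ z : V, v ≤ z → z = v) → yp v ≤ 1)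
    (hlt : ∀ v w : V, v < w → yp v ≤ ym w) : ∀ v, yp v ≤ 1 := by
  classical
  intro v
  obtain ⟨m, hm, hmmax⟩ := (Finset.univ.filter fun z : V => v ≤ z).exists_maximal
    ⟨v, by simp⟩
  simp only [Finset.mem_filter, Finset.mem_univ, true_and] at hm
  have hmax' : ∀ z, m ≤ z → z = m := by
    intro z hmz
    by_contra h
    exact h (le_antisymm (hmmax (by simpa using hm.trans hmz) hmz) hmz)
  have h1 : yp m ≤ 1 := hmax m hmax'
  rcases eq_or_lt_of_le hm with rfl | hlt'
  · exact h1
  · exact ((hlt v m hlt').trans (hle m)).trans h1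



lemma aux_reverse (ym yp x : V → ℝ) (hx : ∀ v, x v = yp v - ym v)
    (h0 : ∀ v, 0 ≤ ym v) (hle : ∀ v, ym v ≤ yp v) (h1 : ∀ v, yp v ≤ 1)
    (hlt : ∀ v w : V, v < w → yp v ≤ ym w) :
    x ∈ STAB (compGraph PO) := by
  classical
  set T : Finset ℝ :=
    insert 0 (insert 1 (Finset.univ.image ym ∪ Finset.univ.image yp)) with hT
  have h0T : (0 : ℝ) ∈ T := by simp [hT]
  have h1T : (1 : ℝ) ∈ T := by simp [hT]
  have hymT : ∀ v, ym v ∈ T := by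
    intro v; simp only [hT, Finset.mem_insert, Finset.mem_union, Finset.mem_image]
    exact Or.inr (Or.inr (Or.inl ⟨v, Finset.mem_univ v, rfl⟩))
  have hypT : ∀ v, yp v ∈ T := by
    intro v; simp only [hT, Finset.mem_insert, Finset.mem_union, Finset.mem_image]
    exact Or.inr (Or.inr (Or.inr ⟨v, Finset.mem_univ v, rfl⟩))
  have hT01 : ∀ r ∈ T, 0 ≤ r ∧ r ≤ 1 := by
    intro r hr
    simp only [hT, Finset.mem_insert, Finset.mem_union, Finset.mem_image] at hr
    rcases hr with rfl | rfl | ⟨v, _, rfl⟩ | ⟨v, _, rfl⟩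
    · norm_num
    · norm_num
    · exact ⟨h0 v, (hle v).trans (h1 v)⟩
    · exact ⟨(h0 v).trans (hle v), h1 v⟩
  set m := T.card with hmdef
  have e : Fin m ≃o T := T.orderIsoOfFin rfl
  have hmpos : 0 < m := Finset.card_pos.mpr ⟨0, h0T⟩
  set tt : ℕ → ℝ := fun i => if h : i < m then (e ⟨i, h⟩ : ℝ) else 1 with htt
  have tt_eval : ∀ i (h : i < m), tt i = (e ⟨i, h⟩ : ℝ) := by
    intro i h; simp only [htt, dif_pos h]
  have tt_mem : ∀ i, i < m → tt i ∈ T := by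
    intro i h; rw [tt_eval i h]; exact (e ⟨i, h⟩).2
  have tt_mono : ∀ i j, i ≤ j → j < m → tt i ≤ tt j := by
    intro i j hij hj
    rw [tt_eval i (lt_of_le_of_lt hij hj), tt_eval j hj]
    exact Subtype.coe_le_coe.mpr (e.monotone (by exact hij))
  have tt0 : tt 0 = 0 := by
    refine le_antisymm ?_ (hT01 _ (tt_mem 0 hmpos)).1
    rw [tt_eval 0 hmpos]
    have : (⟨0, hmpos⟩ : Fin m) ≤ e.symm ⟨0, h0T⟩ := Fin.mk_le_of_le_val (Nat.zero_le _)
    have h2 := Subtype.coe_le_coe.mpr (e.monotone this)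
    rwa [e.apply_symm_apply] at h2
  have ttlast : tt (m - 1) = 1 := by
    have hlt' : m - 1 < m := by omega
    refine le_antisymm (hT01 _ (tt_mem _ hlt')).2 ?_
    rw [tt_eval _ hlt']
    have : e.symm ⟨1, h1T⟩ ≤ (⟨m - 1, hlt'⟩ : Fin m) :=
      Fin.mk_le_of_le_val (Nat.le_sub_one_of_lt (e.symm ⟨1, h1T⟩).isLt)
    have h2 := Subtype.coe_le_coe.mpr (e.monotone this)
    rwa [e.apply_symm_apply] at h2
  -- antichain level sets
  set S : ℕ → Finset V := fun i =>
    Finset.univ.filter (fun v => ym v ≤ tt i ∧ tt i < yp v) with hS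
  set p : ℕ → V → ℝ := fun i => fun v => if v ∈ S i then (1 : ℝ) else 0 with hp
  set w : ℕ → ℝ := fun i => tt (i + 1) - tt i with hw
  have hw0 : ∀ i ∈ Finset.range (m - 1), 0 ≤ w i := by
    intro i hi
    rw [Finset.mem_range] at hi
    exact sub_nonneg.mpr (tt_mono i (i + 1) (Nat.le_succ i) (by omega))
  have hwsum : ∑ i ∈ Finset.range (m - 1), w i = 1 := by
    rw [hw, Finset.sum_range_sub tt (m - 1), tt0, ttlast, sub_zero]
  have hstab : ∀ i, IsStableSet (compGraph PO) (S i) := by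
    intro i u hu v hv hadj
    obtain ⟨hne, hcomp⟩ : u ≠ v ∧ (u ≤ v ∨ v ≤ u) := hadj
    simp only [hS, Finset.mem_filter, Finset.mem_univ, true_and] at hu hv
    rcases hcomp with h | h
    · have huv : u < v := lt_of_le_of_ne h hne
      exact absurd ((hu.2.trans_le (hlt u v huv)).trans_le hv.1) (lt_irrefl _)
    · have hvu : v < u := lt_of_le_of_ne h hne.symm
      exact absurd ((hv.2.trans_le (hlt v u hvu)).trans_le hu.1) (lt_irrefl _)
  have hdecomp : ∀ v, x v = ∑ i ∈ Finset.range (m - 1), w i * p i v := by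
    intro v
    set A : Fin m := e.symm ⟨ym v, hymT v⟩ with hA
    set B : Fin m := e.symm ⟨yp v, hypT v⟩ with hB
    have httA : tt A.val = ym v := by
      rw [tt_eval A.val A.isLt]
      have : (⟨A.val, A.isLt⟩ : Fin m) = A := rfl
      rw [this, hA, e.apply_symm_apply]
    have httB : tt B.val = yp v := by
      rw [tt_eval B.val B.isLt]
      have : (⟨B.val, B.isLt⟩ : Fin m) = B := rfl
      rw [this, hB, e.apply_symm_apply]
    have hAB : A ≤ B := e.symm.monotone (Subtype.mk_le_mk.mpr (hle v))
    have hcond : ∀ i, i < m → ((ym v ≤ tt i ∧ tt i < yp v) ↔ (A.val ≤ i ∧ i < B.val)) := by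
      intro i hi
      rw [← httA, ← httB, tt_eval i hi, tt_eval A.val A.isLt, tt_eval B.val B.isLt]
      constructor
      · rintro ⟨h1', h2'⟩
        constructor
        · have := e.le_iff_le.mp (Subtype.coe_le_coe.mp h1')
          exact this
        · have := e.lt_iff_lt.mp (Subtype.coe_lt_coe.mp h2')
          exact this
      · rintro ⟨h1', h2'⟩
        exact ⟨Subtype.coe_le_coe.mpr (e.monotone h1'),
          Subtype.coe_lt_coe.mpr (e.strictMono h2')⟩
    have step : ∀ i ∈ Finset.range (m - 1),
        w i * p i v = if i ∈ Finset.Ico A.val B.val then w i else 0 := by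
      intro i hi
      rw [Finset.mem_range] at hi
      have him : i < m := by omega
      by_cases hmem : v ∈ S i
      · simp only [hS, Finset.mem_filter, Finset.mem_univ, true_and] at hmem
        have := (hcond i him).mp hmem
        rw [if_pos (Finset.mem_Ico.mpr this)]
        simp [hp, hS, hmem]
      · have hnot : ¬(A.val ≤ i ∧ i < B.val) := by
          intro hc
          exact hmem (by
            simp only [hS, Finset.mem_filter, Finset.mem_univ, true_and]
            exact (hcond i him).mpr hc)
        rw [if_neg (fun hc => hnot (Finset.mem_Ico.mp hc))]
        simp [hp, hmem]
    rw [Finset.sum_congr rfl step, Finset.sum_ite_mem]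
    have hinter : Finset.range (m - 1) ∩ Finset.Ico A.val B.val = Finset.Ico A.val B.val := by
      ext i
      simp only [Finset.mem_inter, Finset.mem_range, Finset.mem_Ico]
      have := B.isLt
      omega
    rw [hinter, Finset.sum_Ico_eq_sub w hAB, hw,
      Finset.sum_range_sub tt, Finset.sum_range_sub tt, httA, httB, hx v]
    ring
  have hx_eq : x = (Finset.range (m - 1)).centerMass w p := by
    rw [Finset.centerMass_eq_of_sum_1 _ p hwsum]
    funext v
    rw [hdecomp v]
    simp [Finset.sum_apply, smul_eq_mul]
  rw [hx_eq]
  exact Finset.centerMass_mem_convexHull _ hw0 (by rw [hwsum]; norm_num)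
    (fun i _ => ⟨S i, hstab i, rfl⟩)


end AuxPotential

/-- Characterization of points of the stable set polytope of the comparability
graph of a finite poset `P` via potentials: `x ∈ STAB(G(P))` iff there are
`y⁻, y⁺ : V → ℝ` with `x_v = y⁺_v - y⁻_v`, `y⁻_v ≤ y⁺_v`, `0 ≤ y⁻_v` for minimal
`v`, `y⁺_v ≤ 1` for maximal `v`, and `y⁺_v ≤ y⁻_w` whenever `v` is covered by `w`. -/
theorem mem_STAB_compGraph_iff_potential {V : Type*} [Fintype V] [DecidableEq V]
    (P : PartialOrder V) (x : V → ℝ) :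
    x ∈ STAB (compGraph P) ↔
      ∃ yminus yplus : V → ℝ,
        (∀ v, x v = yplus v - yminus v ∧ yminus v ≤ yplus v) ∧
        (∀ v, (∀ z, P.le z v → z = v) → 0 ≤ yminus v) ∧
        (∀ v, (∀ z, P.le v z → z = v) → yplus v ≤ 1) ∧
        (∀ v w, P.lt v w → (∀ z, ¬(P.lt v z ∧ P.lt z w)) →
          yplus v ≤ yminus w) := by
  classical
  letI := P
  constructor
  · intro hx
    have hsub : STAB (compGraph P) ⊆ {x : V → ℝ | ∃ yminus yplus : V → ℝ,
        (∀ v, x v = yplus v - yminus v ∧ yminus v ≤ yplus v) ∧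
        (∀ v, (∀ z, P.le z v → z = v) → 0 ≤ yminus v) ∧
        (∀ v, (∀ z, P.le v z → z = v) → yplus v ≤ 1) ∧
        (∀ v w, P.lt v w → (∀ z, ¬(P.lt v z ∧ P.lt z w)) →
          yplus v ≤ yminus w)} := by
      apply convexHull_min
      · rintro χ ⟨S, hS, rfl⟩
        refine ⟨fun v => if (∃ s ∈ S, s < v) then (1 : ℝ) else 0,
                fun v => if (∃ s ∈ S, s ≤ v) then (1 : ℝ) else 0, ?_, ?_, ?_, ?_⟩
        · intro v
          beta_reduce
          constructor
          · show (if v ∈ S then (1 : ℝ) else 0) = _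
            by_cases hv : v ∈ S
            · rw [if_pos hv, if_pos ⟨v, hv, le_refl v⟩, if_neg, sub_zero]
              rintro ⟨s, hs, hsl⟩
              exact hS s hs v hv (show s ≠ v ∧ (s ≤ v ∨ v ≤ s) from ⟨ne_of_lt hsl, Or.inl hsl.le⟩)
            · have hiff : (∃ s ∈ S, s ≤ v) ↔ (∃ s ∈ S, s < v) :=
                ⟨fun ⟨s, hs, hsle⟩ => ⟨s, hs, lt_of_le_of_ne hsle
                    (fun h => hv (h ▸ hs))⟩,
                  fun ⟨s, hs, hslt⟩ => ⟨s, hs, hslt.le⟩⟩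
              rw [if_neg hv, if_congr hiff rfl rfl, sub_self]
          · by_cases hl : ∃ s ∈ S, s < v
            · obtain ⟨s, hs, h⟩ := hl
              rw [if_pos ⟨s, hs, h⟩, if_pos ⟨s, hs, h.le⟩]
            · rw [if_neg hl]
              split_ifs <;> norm_num
        · intro v _
          beta_reduce
          split_ifs <;> norm_num
        · intro v _
          beta_reduce
          split_ifs <;> norm_num
        · intro v w hvw _
          beta_reduce
          by_cases h : ∃ s ∈ S, s ≤ v
          · obtain ⟨s, hs, hsv⟩ := h
            rw [if_pos ⟨s, hs, hsv⟩, if_pos ⟨s, hs, lt_of_le_of_lt hsv hvw⟩]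
          · rw [if_neg h]
            split_ifs <;> norm_num
      · intro x1 hx1 x2 hx2 a b ha hb hab
        obtain ⟨m1, p1, h11, h12, h13, h14⟩ := hx1
        obtain ⟨m2, p2, h21, h22, h23, h24⟩ := hx2
        refine ⟨fun v => a * m1 v + b * m2 v, fun v => a * p1 v + b * p2 v,
          ?_, ?_, ?_, ?_⟩
        · intro v
          beta_reduce
          have e1 := (h11 v).1
          have e2 := (h21 v).1
          have l1 := mul_le_mul_of_nonneg_left (h11 v).2 ha
          have l2 := mul_le_mul_of_nonneg_left (h21 v).2 hb
          constructor
          · simp only [Pi.add_apply, Pi.smul_apply, smul_eq_mul]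
            rw [e1, e2]; ring
          · linarith
        · intro v hv
          beta_reduce
          have a1 := mul_nonneg ha (h12 v hv)
          have a2 := mul_nonneg hb (h22 v hv)
          linarith
        · intro v hv
          beta_reduce
          have a1 := mul_le_mul_of_nonneg_left (h13 v hv) ha
          have a2 := mul_le_mul_of_nonneg_left (h23 v hv) hb
          nlinarith
        · intro v w hvw hcov
          beta_reduce
          have a1 := mul_le_mul_of_nonneg_left (h14 v w hvw hcov) ha
          have a2 := mul_le_mul_of_nonneg_left (h24 v w hvw hcov) hb
          linarith
    exact hsub hx
  · rintro ⟨ym, yp, h1, h2, h3, h4⟩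
    have hle : ∀ v, ym v ≤ yp v := fun v => (h1 v).2
    have hxv : ∀ v, x v = yp v - ym v := fun v => (h1 v).1
    have hltall : ∀ v w : V, v < w → yp v ≤ ym w :=
      aux_lt_imp (PO := P) ym yp hle h4
    have h0 : ∀ v, 0 ≤ ym v := aux_nonneg (PO := P) ym yp hle h2 hltall
    have h1' : ∀ v, yp v ≤ 1 := aux_le_one (PO := P) ym yp hle h3 hltall
    exact aux_reverse (PO := P) ym yp x hxv h0 hle h1' hltall
end

section
/- Let P be a finite poset on ground set V with |V| = n ≥ 1, and let x ∈ STAB(G(P)) have all coordinates strictly positive. Then there exists an interval order I on the same ground set V such that I extends P and H(I) ≤ −(1/n) Σ_{v∈V} log₂ x_v. -/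
/-- `I` is an interval order: it admits an interval representation by real
intervals `(l v, r v)` with `v <_I w` iff `r v ≤ l w`. -/
def IsIntervalOrder {V : Type*} (I : PartialOrder V) : Prop :=
  ∃ l r : V → ℝ, (∀ v, l v < r v) ∧ ∀ v w, I.lt v w ↔ r v ≤ l w

/-- `Q` extends `P`: same ground set, and every relation of `P` holds in `Q`. -/
def Extends {V : Type*} (Q P : PartialOrder V) : Prop :=
  ∀ v w : V, P.le v w → Q.le v w

/-- The interval order given by an interval representation. -/
def intervalOrderOf {V : Type*} (l r : V → ℝ) (h : ∀ v, l v < r v) : PartialOrder V where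
  le v w := v = w ∨ r v ≤ l w
  lt v w := r v ≤ l w
  le_refl v := Or.inl rfl
  le_trans := by
    rintro a b c (rfl | hab) hbc
    · exact hbc
    · rcases hbc with rfl | hbc
      · exact Or.inr hab
      · exact Or.inr (le_trans hab (le_trans (h b).le hbc))
  lt_iff_le_not_ge := by
    intro a b
    show (r a ≤ l b) ↔ (a = b ∨ r a ≤ l b) ∧ ¬ (b = a ∨ r b ≤ l a)
    constructor
    · intro hlt
      refine ⟨Or.inr hlt, ?_⟩
      rintro (heq | hba)
      · subst heq; exact absurd hlt (not_le.2 (h _))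
      · have h1 := h a; have h2 := h b; linarith
    · rintro ⟨(rfl | hab), hnn⟩
      · exact absurd (Or.inl rfl) hnn
      · exact hab
  le_antisymm := by
    rintro a b (rfl | hab) hba
    · rfl
    · rcases hba with rfl | hba
      · rfl
      · have h1 := h a; have h2 := h b; exfalso; linarith

lemma intervalOrderOf_lt {V : Type*} (l r : V → ℝ) (h : ∀ v, l v < r v) (v w : V) :
    (intervalOrderOf l r h).lt v w ↔ r v ≤ l w := Iff.rfl

lemma intervalOrderOf_le {V : Type*} (l r : V → ℝ) (h : ∀ v, l v < r v) (v w : V) :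
    (intervalOrderOf l r h).le v w ↔ v = w ∨ r v ≤ l w := Iff.rfl

/-- From any strictly positive point `x` of the stable set polytope of the
comparability graph of `P`, one gets an interval order `I` extending `P` with
`H(I) ≤ -(1/n) ∑_v log₂ x_v`. -/
theorem exists_intervalOrder_extension {V : Type*} [Fintype V] [DecidableEq V]
    (P : PartialOrder V) (hn : 1 ≤ Fintype.card V)
    (x : V → ℝ) (hx : x ∈ STAB (compGraph P)) (hpos : ∀ v, 0 < x v) :
    ∃ I : PartialOrder V, IsIntervalOrder I ∧ Extends I P ∧
      posetEntropy I ≤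
        -(1 / (Fintype.card V : ℝ)) * ∑ v, Real.logb 2 (x v) := by
  classical
  -- Step 1: chain bound from the convex decomposition of x
  unfold STAB at hx
  rw [convexHull_eq] at hx
  obtain ⟨ι, t, wt, zf, hw0, hw1, hzs, hxz⟩ := hx
  have hxv : ∀ v, x v = ∑ i ∈ t, wt i * zf i v := by
    intro v
    rw [← hxz, Finset.centerMass_eq_of_sum_1 _ _ hw1]
    rw [Finset.sum_apply]
    refine Finset.sum_congr rfl fun i _ => ?_
    simp [smul_eq_mul]
  have hchain : ∀ C : Finset V, IsChain P.le (C : Set V) → ∑ v ∈ C, x v ≤ 1 := by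
    intro C hC
    have h1 : ∀ i ∈ t, ∑ v ∈ C, zf i v ≤ 1 := by
      intro i hi
      obtain ⟨S, hS, hz⟩ := hzs i hi
      rw [hz]
      rw [Finset.sum_boole]
      have hcard : (C.filter (· ∈ S)).card ≤ 1 := by
        rw [Finset.card_le_one]
        intro a ha b hb
        simp only [Finset.mem_filter] at ha hb
        by_contra hne
        have hcomp := hC (Finset.mem_coe.2 ha.1) (Finset.mem_coe.2 hb.1) hne
        exact hS a ha.2 b hb.2 (show a ≠ b ∧ (P.le a b ∨ P.le b a) from ⟨hne, hcomp⟩)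
      exact_mod_cast hcard
    calc ∑ v ∈ C, x v = ∑ v ∈ C, ∑ i ∈ t, wt i * zf i v := by simp only [hxv]
      _ = ∑ i ∈ t, ∑ v ∈ C, wt i * zf i v := Finset.sum_comm
      _ = ∑ i ∈ t, wt i * ∑ v ∈ C, zf i v := by simp [Finset.mul_sum]
      _ ≤ ∑ i ∈ t, wt i * 1 :=
          Finset.sum_le_sum (fun i hi => mul_le_mul_of_nonneg_left (h1 i hi) (hw0 i hi))
      _ = 1 := by simpa using hw1
  -- Step 2: the left endpoint function
  set A : V → Finset (Finset V) := fun v =>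
      Finset.univ.filter (fun C => (∀ w ∈ C, P.lt w v) ∧ IsChain P.le (C : Set V)) with hA
  have hmemA : ∀ (v : V) (C : Finset V),
      C ∈ A v ↔ (∀ w ∈ C, P.lt w v) ∧ IsChain P.le (C : Set V) := by
    intro v C; simp [hA]
  have hAne : ∀ v, (A v).Nonempty := by
    intro v
    exact ⟨∅, (hmemA v ∅).2 ⟨by simp, by simp [IsChain]⟩⟩
  set lf : V → ℝ := fun v => (A v).sup' (hAne v) (fun C => ∑ w ∈ C, x w) with hlf
  have hl0 : ∀ v, 0 ≤ lf v := by
    intro v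
    have hEmpty : (∅ : Finset V) ∈ A v := (hmemA v ∅).2 ⟨by simp, by simp [IsChain]⟩
    have := Finset.le_sup' (fun C => ∑ w ∈ C, x w) hEmpty
    simpa [hlf, -Finset.le_sup'_iff] using this
  have hach : ∀ v, ∃ C ∈ A v, lf v = ∑ w ∈ C, x w := by
    intro v
    obtain ⟨C, hC, hCeq⟩ := Finset.exists_mem_eq_sup' (hAne v) (fun C => ∑ w ∈ C, x w)
    exact ⟨C, hC, by simpa [hlf] using hCeq⟩
  have hkey : ∀ v, ∃ C : Finset V, IsChain P.le ((insert v C : Finset V) : Set V) ∧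
      (∀ w ∈ C, P.lt w v) ∧ lf v + x v = ∑ w ∈ insert v C, x w := by
    intro v
    obtain ⟨C, hCA, hCeq⟩ := hach v
    obtain ⟨hbelow, hchainC⟩ := (hmemA v C).1 hCA
    have hvC : v ∉ C := by
      intro h
      have := hbelow v h
      exact absurd ((P.lt_iff_le_not_ge v v).1 this).2 (by simp [P.le_refl])
    refine ⟨C, ?_, hbelow, ?_⟩
    · rw [Finset.coe_insert]
      exact hchainC.insert (fun b hb _ =>
        Or.inr ((P.lt_iff_le_not_ge b v).1 (hbelow b (Finset.mem_coe.1 hb))).1)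
    · rw [Finset.sum_insert hvC, hCeq]; ring
  have hstep : ∀ v w, P.lt v w → lf v + x v ≤ lf w := by
    intro v w hvw
    obtain ⟨C, hCchain, hbelow, hsum⟩ := hkey v
    rw [hsum]
    have hmem : insert v C ∈ A w := by
      rw [hmemA]
      refine ⟨?_, hCchain⟩
      intro u hu
      rcases Finset.mem_insert.1 hu with rfl | hu
      · exact hvw
      · have h1 := (P.lt_iff_le_not_ge u v).1 (hbelow u hu)
        have h2 := (P.lt_iff_le_not_ge v w).1 hvw
        exact (P.lt_iff_le_not_ge u w).2
          ⟨P.le_trans _ _ _ h1.1 h2.1, fun hle => h1.2 (P.le_trans _ _ _ h2.1 hle)⟩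
    have := Finset.le_sup' (fun C => ∑ u ∈ C, x u) hmem
    simpa [hlf, -Finset.le_sup'_iff] using this
  have hub : ∀ v, lf v + x v ≤ 1 := by
    intro v
    obtain ⟨C, hCchain, _, hsum⟩ := hkey v
    rw [hsum]; exact hchain _ hCchain
  set rf : V → ℝ := fun v => lf v + x v with hrf
  have hlr : ∀ v, lf v < rf v := by
    intro v; simp only [hrf]; linarith [hpos v]
  have hr1 : ∀ v, rf v ≤ 1 := by
    intro v; simp only [hrf]; exact hub v
  have hstep' : ∀ v w, P.lt v w → rf v ≤ lf w := by
    intro v w h; simp only [hrf]; exact hstep v w h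
  -- Step 3: the interval order
  set I : PartialOrder V := intervalOrderOf lf rf hlr with hI
  have hIlt : ∀ v w, I.lt v w ↔ rf v ≤ lf w := fun v w => Iff.rfl
  have hIle : ∀ v w, I.le v w ↔ v = w ∨ rf v ≤ lf w := fun v w => Iff.rfl
  -- Step 4: x ∈ STAB (compGraph I)
  have hxSTAB : x ∈ STAB (compGraph I) := by
    set T : Finset ℝ := insert 0 (Finset.image lf Finset.univ ∪ Finset.image rf Finset.univ)
      with hT
    have hT0 : (0:ℝ) ∈ T := Finset.mem_insert_self _ _
    have hTl : ∀ v, lf v ∈ T := fun v =>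
      Finset.mem_insert_of_mem
        (Finset.mem_union_left _ (Finset.mem_image_of_mem _ (Finset.mem_univ v)))
    have hTr : ∀ v, rf v ∈ T := fun v =>
      Finset.mem_insert_of_mem
        (Finset.mem_union_right _ (Finset.mem_image_of_mem _ (Finset.mem_univ v)))
    have hTnonneg : ∀ a ∈ T, (0:ℝ) ≤ a := by
      intro a ha
      simp only [hT, Finset.mem_insert, Finset.mem_union, Finset.mem_image] at ha
      rcases ha with rfl | ⟨v, -, rfl⟩ | ⟨v, -, rfl⟩
      · exact le_refl 0
      · exact hl0 v
      · exact le_trans (hl0 v) (hlr v).le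
    have hTle1 : ∀ a ∈ T, a ≤ 1 := by
      intro a ha
      simp only [hT, Finset.mem_insert, Finset.mem_union, Finset.mem_image] at ha
      rcases ha with rfl | ⟨v, -, rfl⟩ | ⟨v, -, rfl⟩
      · norm_num
      · exact le_trans (hlr v).le (hr1 v)
      · exact hr1 v
    set k := T.card with hk
    have hkpos : 0 < k := Finset.card_pos.2 ⟨0, hT0⟩
    set e := T.orderIsoOfFin hk.symm with he
    set tf : ℕ → ℝ := fun j => if h : j < k then (e ⟨j, h⟩ : ℝ) else 1 with htf
    have htfmem : ∀ (j : ℕ) (h : j < k), tf j ∈ T := by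
      intro j h; simp only [htf, dif_pos h]; exact (e ⟨j, h⟩).2
    have htfeq : ∀ (m : Fin k), tf m.val = (e m : ℝ) := by
      intro m; simp only [htf, dif_pos m.isLt]
    have htmono : ∀ {i j : ℕ}, i < k → j < k → i ≤ j → tf i ≤ tf j := by
      intro i j hi hj hij
      simp only [htf, dif_pos hi, dif_pos hj]
      exact Subtype.coe_le_coe.2 (e.monotone (show (⟨i, hi⟩ : Fin k) ≤ ⟨j, hj⟩ from hij))
    have htstrict : ∀ {i j : ℕ}, i < k → j < k → i < j → tf i < tf j := by
      intro i j hi hj hij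
      simp only [htf, dif_pos hi, dif_pos hj]
      exact Subtype.coe_lt_coe.2 (e.strictMono (show (⟨i, hi⟩ : Fin k) < ⟨j, hj⟩ from hij))
    have htf1 : ∀ j, tf j ≤ 1 := by
      intro j
      by_cases h : j < k
      · exact hTle1 _ (htfmem j h)
      · simp [htf, h]
    have htfk : tf k = 1 := by simp [htf]
    have htf0 : tf 0 = 0 := by
      refine le_antisymm ?_ (hTnonneg _ (htfmem 0 hkpos))
      calc tf 0 = (e ⟨0, hkpos⟩ : ℝ) := htfeq ⟨0, hkpos⟩
        _ ≤ (e (e.symm ⟨0, hT0⟩) : ℝ) :=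
            Subtype.coe_le_coe.2 (e.monotone (Fin.le_def.2 (Nat.zero_le _)))
        _ = 0 := by rw [OrderIso.apply_symm_apply]
    set wgt : ℕ → ℝ := fun j => tf (j+1) - tf j with hwgt
    have hwnn : ∀ j ∈ Finset.range k, 0 ≤ wgt j := by
      intro j hj
      rw [Finset.mem_range] at hj
      simp only [hwgt]
      rcases lt_or_ge (j+1) k with h | h
      · linarith [htmono hj h (Nat.le_succ j)]
      · have h2 : tf (j+1) = 1 := by simp [htf, not_lt.2 h]
        rw [h2]
        linarith [htf1 j]
    have hwsum : ∑ j ∈ Finset.range k, wgt j = 1 := by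
      simp only [hwgt]
      rw [Finset.sum_range_sub tf, htfk, htf0]
      ring
    set SS : ℕ → Finset V := fun j => Finset.univ.filter (fun u => lf u ≤ tf j ∧ tf j < rf u)
      with hSS
    have hSSmem : ∀ (j : ℕ) (u : V), u ∈ SS j ↔ lf u ≤ tf j ∧ tf j < rf u := by
      intro j u; simp [hSS]
    have hstable : ∀ j, IsStableSet (compGraph I) (SS j) := by
      intro j u hu v hv hadj
      rw [hSSmem] at hu hv
      obtain ⟨hne, hcomp⟩ : u ≠ v ∧ (I.le u v ∨ I.le v u) := hadj
      have hcomp' : (u = v ∨ rf u ≤ lf v) ∨ (v = u ∨ rf v ≤ lf u) := hcomp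
      rcases hcomp' with (rfl | h) | (rfl | h)
      · exact hne rfl
      · linarith [hu.2, hv.1]
      · exact hne rfl
      · linarith [hv.2, hu.1]
    unfold STAB
    have hcm : (Finset.range k).centerMass wgt
        (fun j => fun u => if u ∈ SS j then (1:ℝ) else 0) = x := by
      rw [Finset.centerMass_eq_of_sum_1 _ _ hwsum]
      funext v
      rw [Finset.sum_apply]
      have hrw : ∀ j ∈ Finset.range k,
          (wgt j • fun u => if u ∈ SS j then (1:ℝ) else 0) v
            = if lf v ≤ tf j ∧ tf j < rf v then wgt j else 0 := by
        intro j _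
        simp only [Pi.smul_apply, smul_eq_mul]
        by_cases h : v ∈ SS j
        · rw [if_pos h, if_pos ((hSSmem j v).1 h), mul_one]
        · rw [if_neg h, if_neg (fun hc => h ((hSSmem j v).2 hc)), mul_zero]
      rw [Finset.sum_congr rfl hrw, ← Finset.sum_filter]
      set a : Fin k := e.symm ⟨lf v, hTl v⟩ with ha'
      set b : Fin k := e.symm ⟨rf v, hTr v⟩ with hb'
      have hta : tf a.val = lf v := by
        rw [htfeq a, ha', OrderIso.apply_symm_apply]
      have htb : tf b.val = rf v := by
        rw [htfeq b, hb', OrderIso.apply_symm_apply]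
      have hab : a.val < b.val := by
        by_contra hc
        push_neg at hc
        have := htmono b.isLt a.isLt hc
        rw [hta, htb] at this
        linarith [hlr v]
      have hfeq : (Finset.range k).filter (fun j => lf v ≤ tf j ∧ tf j < rf v)
          = Finset.Ico a.val b.val := by
        ext j
        simp only [Finset.mem_filter, Finset.mem_range, Finset.mem_Ico]
        constructor
        · rintro ⟨hjk, h1, h2⟩
          constructor
          · by_contra hc
            push_neg at hc
            have := htstrict hjk a.isLt hc
            rw [hta] at this
            linarith
          · by_contra hc
            push_neg at hc
            have := htmono b.isLt hjk hc
            rw [htb] at this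
            linarith
        · rintro ⟨h1, h2⟩
          have hjk : j < k := lt_trans h2 b.isLt
          refine ⟨hjk, ?_, ?_⟩
          · rw [← hta]; exact htmono a.isLt hjk h1
          · rw [← htb]; exact htstrict hjk b.isLt h2
      rw [hfeq]
      simp only [hwgt]
      rw [Finset.sum_Ico_eq_sub _ hab.le, Finset.sum_range_sub tf, Finset.sum_range_sub tf,
        hta, htb, htf0]
      simp only [hrf]
      ring
    rw [← hcm]
    exact Finset.centerMass_mem_convexHull _ hwnn (by rw [hwsum]; norm_num)
      (fun j _ => ⟨SS j, hstable j, rfl⟩)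
  -- Step 5: conclude
  refine ⟨I, ⟨lf, rf, hlr, hIlt⟩, ?_, ?_⟩
  · intro v w h
    by_cases hvw : v = w
    · exact Or.inl hvw
    · have hlt : P.lt v w := (P.lt_iff_le_not_ge v w).2
        ⟨h, fun h' => hvw (P.le_antisymm v w h h')⟩
      exact Or.inr (hstep' v w hlt)
  · unfold posetEntropy graphEntropy
    have hsub : STAB (compGraph I) ⊆ {y : V → ℝ | ∀ v, y v ≤ 1} := by
      unfold STAB
      apply convexHull_min
      · rintro y ⟨S, -, rfl⟩ v
        dsimp only
        split <;> norm_num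
      · intro y hy z hz a b ha hb hab v
        have h1 : a * y v + b * z v ≤ a * 1 + b * 1 :=
          add_le_add (mul_le_mul_of_nonneg_left (hy v) ha)
            (mul_le_mul_of_nonneg_left (hz v) hb)
        simpa [hab] using h1
    apply csInf_le
    · refine ⟨0, ?_⟩
      rintro h ⟨y, hy, hypos, rfl⟩
      have h2 : ∑ v, Real.logb 2 (y v) ≤ 0 :=
        Finset.sum_nonpos (fun v _ =>
          Real.logb_nonpos one_lt_two (hypos v).le (hsub hy v))
      have h3 : (0:ℝ) ≤ 1 / (Fintype.card V : ℝ) := by positivity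
      nlinarith
    · exact ⟨x, hxSTAB, hpos, rfl⟩
end

section
/- Let I be a finite interval order on ground set V and let A_1, …, A_k be a greedy antichain sequence of I, i.e., a partition of V into antichains such that each A_i is a maximum-cardinality antichain of I restricted to V ∖ (A_1 ∪ … ∪ A_{i−1}). Then there exists a permutation σ of {1, …, k} such that the weak order W on V with layers A_{σ(1)}, …, A_{σ(k)} (defined by v <_W w iff v ∈ A_{σ(i)}, w ∈ A_{σ(j)} with i < j) extends I. -/
/-- If `A 0, …, A (k-1)` is a greedy antichain sequence of an interval order `I`
(each `A i` a maximum antichain of `I` restricted to the remaining elements),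
then the layers can be permuted by some `σ` so that the weak order `W` with
layers `A (σ 0), …, A (σ (k-1))` extends `I`. -/
theorem greedy_antichains_of_intervalOrder_reorder {V : Type*} [Fintype V]
    [DecidableEq V] (I : PartialOrder V) (hI : IsIntervalOrder I)
    {k : ℕ} (A : Fin k → Finset V) (hA : IsGreedySeq (compGraph I) A) :
    ∃ σ : Equiv.Perm (Fin k), ∃ W : PartialOrder V,
      (∀ v w : V, W.lt v w ↔ ∃ i j : Fin k, i < j ∧ v ∈ A (σ i) ∧ w ∈ A (σ j)) ∧
      Extends W I := by
  classical
  obtain ⟨l, r, hlr, hiff⟩ := hI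
  obtain ⟨hstab, hdisj, hcover, -⟩ := hA
  have huniq : ∀ v (i j : Fin k), v ∈ A i → v ∈ A j → i = j := by
    intro v i j hi hj
    by_contra hne
    exact (Finset.disjoint_left.mp (hdisj i j hne)) hi hj
  choose idx hidx using hcover
  -- the key real-valued invariant of each layer: the minimum right endpoint
  set g : Fin k → ℝ := fun i =>
    if h : (A i).Nonempty then (A i).inf' h r else 0 with hg_def
  -- key inequality
  have hkey : ∀ v w : V, I.lt v w → g (idx v) < g (idx w) := by
    intro v w hvw
    have hr : r v ≤ l w := (hiff v w).mp hvw
    have hvA := hidx v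
    have hwA := hidx w
    have hnev : (A (idx v)).Nonempty := ⟨v, hvA⟩
    have hnew : (A (idx w)).Nonempty := ⟨w, hwA⟩
    obtain ⟨u, hu, hgu⟩ := Finset.exists_mem_eq_inf' hnew r
    have h1 : g (idx v) ≤ r v := by
      rw [hg_def]; simp only [dif_pos hnev]
      exact Finset.inf'_le r hvA
    have h2 : g (idx w) = r u := by rw [hg_def]; simp only [dif_pos hnew]; exact hgu
    have h3 : r v < r u := by
      rcases eq_or_ne u w with rfl | hneuw
      · exact lt_of_le_of_lt hr (hlr u)
      · have hnadj := hstab (idx w) u hu w hwA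
        have : ¬ I.lt u w := by
          intro hlt
          exact hnadj (show u ≠ w ∧ (I.le u w ∨ I.le w u) from ⟨hneuw, Or.inl (@le_of_lt V I.toPreorder u w hlt)⟩)
        have h4 : ¬ (r u ≤ l w) := fun hc => this ((hiff u w).mpr hc)
        exact lt_of_le_of_lt hr (lt_of_not_ge h4)
    rw [h2]; exact lt_of_le_of_lt h1 h3
  set σ : Equiv.Perm (Fin k) := Tuple.sort g with hσ
  have hmono : ∀ i j : Fin k, g i < g j → σ.symm i < σ.symm j := by
    intro i j hij
    by_contra hc
    push_neg at hc
    have := Tuple.monotone_sort g hc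
    simp only [Function.comp_apply, hσ, Equiv.apply_symm_apply] at this
    exact absurd (lt_of_lt_of_le hij this) (lt_irrefl _)
  set f : V → Fin k := fun v => σ.symm (idx v) with hf_def
  refine ⟨σ, {
    le := fun v w => v = w ∨ f v < f w
    lt := fun v w => f v < f w
    le_refl := fun v => Or.inl rfl
    le_trans := by
      rintro a b c (rfl | hab) (rfl | hbc)
      · exact Or.inl rfl
      · exact Or.inr hbc
      · exact Or.inr hab
      · exact Or.inr (lt_trans hab hbc)
    le_antisymm := by
      rintro a b (rfl | hab) (h | hba)
      · rfl
      · rfl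
      · exact h.symm
      · exact absurd (lt_trans hab hba) (lt_irrefl _)
    lt_iff_le_not_ge := by
      intro a b
      constructor
      · intro h
        have h' : f a < f b := h
        refine ⟨Or.inr h', ?_⟩
        rintro (rfl | hba)
        · exact lt_irrefl _ h'
        · exact lt_irrefl _ (lt_trans h' hba)
      · rintro ⟨(rfl | hab), hn⟩
        · exact absurd (Or.inl rfl) hn
        · exact hab }, ?_, ?_⟩
  · intro v w
    show f v < f w ↔ _
    constructor
    · intro h
      refine ⟨f v, f w, h, ?_, ?_⟩
      · simpa [hf_def, Equiv.apply_symm_apply] using hidx v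
      · simpa [hf_def, Equiv.apply_symm_apply] using hidx w
    · rintro ⟨i, j, hij, hv, hw⟩
      have h1 : idx v = σ i := huniq v _ _ (hidx v) hv
      have h2 : idx w = σ j := huniq w _ _ (hidx w) hw
      simpa [hf_def, h1, h2] using hij
  · intro v w hle
    rcases eq_or_ne v w with rfl | hne
    · exact Or.inl rfl
    · have hlt : I.lt v w := by
        rw [@lt_iff_le_and_ne V I]
        exact ⟨hle, hne⟩
      exact Or.inr (hmono _ _ (hkey v w hlt))
end
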